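/- arXiv:2304.00124 — 6 statements merged into one kernel-verified Lean document; each statement's English description precedes it below -/
import Mathlib

section
/- For every r < 0 there exists a constant C > 0 (depending only on r) such that for all measurable functions F, G : [0,∞) → ℂ, one has ∫_0^∞ (ξ+1)^{2(2r-1)} | ∫_0^ξ F(ξ-η) G(η) dη |² dξ ≤ C (∫_0^∞ (ξ+1)^{2r} |F(ξ)|² dξ) (∫_0^∞ (ξ+1)^{2r} |G(ξ)|² dξ). (This is the Fourier-side form of the statement that the product of two functions in the Hardy–Sobolev space H^r_+(ℝ) lies in H^{2r-1}(ℝ) with the corresponding norm bound.) -/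
open MeasureTheory Set
open scoped ENNReal

lemma two_conj' : Real.HolderConjugate 2 2 := Real.holderConjugate_iff.mpr ⟨one_lt_two, by norm_num⟩

lemma sq_helper' {x c s : ℝ} (hx : 0 < x) (hc : 0 ≤ c) :
    (x ^ s * c) ^ (2 : ℝ) = x ^ (2 * s) * c ^ 2 := by
  rw [show (2 : ℝ) = ((2 : ℕ) : ℝ) from by norm_num, Real.rpow_natCast, mul_pow,
    ← Real.rpow_natCast (x ^ s) 2, ← Real.rpow_mul hx.le]
  norm_num [mul_comm s 2]

/-- For every `r < 0` there is a constant `C > 0` such that for all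
measurable `F G : [0,∞) → ℂ` (extended to `ℝ`), the Fourier-side product estimate
`‖fg‖_{H^{2r-1}} ≲ ‖f‖_{H^r} ‖g‖_{H^r}` for Hardy–Sobolev functions holds, i.e.
`∫_0^∞ (ξ+1)^{2(2r-1)} |∫_0^ξ F(ξ-η)G(η) dη|² dξ
  ≤ C (∫_0^∞ (ξ+1)^{2r}|F|²)(∫_0^∞ (ξ+1)^{2r}|G|²)`. -/
theorem stmt1 (r : ℝ) (hr : r < 0) :
    ∃ C : ℝ, 0 < C ∧
      ∀ F G : ℝ → ℂ, Measurable F → Measurable G →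
        (∫⁻ ξ in Ioi (0 : ℝ),
            ENNReal.ofReal ((ξ + 1) ^ (2 * (2 * r - 1)) *
              ‖∫ η in (0 : ℝ)..ξ, F (ξ - η) * G η‖ ^ 2))
          ≤ ENNReal.ofReal C *
              (∫⁻ ξ in Ioi (0 : ℝ), ENNReal.ofReal ((ξ + 1) ^ (2 * r) * ‖F ξ‖ ^ 2)) *
              (∫⁻ ξ in Ioi (0 : ℝ), ENNReal.ofReal ((ξ + 1) ^ (2 * r) * ‖G ξ‖ ^ 2)) := by
  refine ⟨1, one_pos, ?_⟩
  intro F G hF hG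
  rw [ENNReal.ofReal_one, one_mul]
  set A : ℝ → ℝ≥0∞ := fun u => ENNReal.ofReal ((u + 1) ^ (2 * r) * ‖F u‖ ^ 2) with hA
  set B : ℝ → ℝ≥0∞ := fun u => ENNReal.ofReal ((u + 1) ^ (2 * r) * ‖G u‖ ^ 2) with hB
  have hAm : Measurable A := by
    apply Measurable.ennreal_ofReal
    exact ((measurable_id.add_const 1).pow measurable_const).mul (hF.norm.pow measurable_const)
  have hBm : Measurable B := by
    apply Measurable.ennreal_ofReal
    exact ((measurable_id.add_const 1).pow measurable_const).mul (hG.norm.pow measurable_const)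
  set At : ℝ → ℝ≥0∞ := (Ici (0 : ℝ)).indicator A with hAt
  set Bt : ℝ → ℝ≥0∞ := (Ioi (0 : ℝ)).indicator B with hBt
  have hAtm : Measurable At := hAm.indicator measurableSet_Ici
  have hBtm : Measurable Bt := hBm.indicator measurableSet_Ioi
  -- pointwise estimate
  have key : ∀ ξ ∈ Ioi (0 : ℝ),
      ENNReal.ofReal ((ξ + 1) ^ (2 * (2 * r - 1)) *
          ‖∫ η in (0 : ℝ)..ξ, F (ξ - η) * G η‖ ^ 2)
        ≤ ∫⁻ η, At (ξ - η) * Bt η := by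
    intro ξ hξ
    rw [mem_Ioi] at hξ
    have hξ1 : (0 : ℝ) < ξ + 1 := by linarith
    set f : ℝ → ℝ≥0∞ := fun η =>
      ENNReal.ofReal ((ξ - η + 1) ^ r * ‖F (ξ - η)‖) *
        ENNReal.ofReal ((η + 1) ^ r * ‖G η‖) with hf
    set g : ℝ → ℝ≥0∞ := fun η =>
      ENNReal.ofReal ((ξ - η + 1) ^ (-r) * (η + 1) ^ (-r)) with hg
    have hmsub : Measurable fun η : ℝ => ξ - η := measurable_const.sub measurable_id
    have hfm : Measurable f := by
      refine Measurable.fun_mul ?_ ?_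
      · exact (((hmsub.add_const 1).pow measurable_const).mul
          (hF.comp hmsub).norm).ennreal_ofReal
      · exact (((measurable_id.add_const 1).pow measurable_const).mul
          hG.norm).ennreal_ofReal
    have hgm : Measurable g := by
      exact (((hmsub.add_const 1).pow measurable_const).mul
        ((measurable_id.add_const 1).pow measurable_const)).ennreal_ofReal
    -- step 1: norm of integral ≤ lintegral of norms
    have h1 : ENNReal.ofReal ‖∫ η in (0 : ℝ)..ξ, F (ξ - η) * G η‖
        ≤ ∫⁻ η in Ioc (0 : ℝ) ξ, ENNReal.ofReal (‖F (ξ - η)‖ * ‖G η‖) := by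
      rw [intervalIntegral.integral_of_le hξ.le, ofReal_norm]
      refine (enorm_integral_le_lintegral_enorm _).trans_eq ?_
      refine lintegral_congr fun η => ?_
      rw [← ofReal_norm, norm_mul]
    -- step 2: split the weight
    have h2 : ∫⁻ η in Ioc (0 : ℝ) ξ, ENNReal.ofReal (‖F (ξ - η)‖ * ‖G η‖)
        = ∫⁻ η in Ioc (0 : ℝ) ξ, (f * g) η := by
      refine setLIntegral_congr_fun measurableSet_Ioc (fun η hη => ?_)
      obtain ⟨hη0, hηξ⟩ := hη
      have hx : (0 : ℝ) < ξ - η + 1 := by linarith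
      have hy : (0 : ℝ) < η + 1 := by linarith
      simp only [hf, hg, Pi.mul_apply]
      rw [← ENNReal.ofReal_mul (by positivity), ← ENNReal.ofReal_mul (by positivity)]
      congr 1
      have e1 : (ξ - η + 1) ^ r * (ξ - η + 1) ^ (-r) = 1 := by
        rw [← Real.rpow_add hx]; simp
      have e2 : (η + 1) ^ r * (η + 1) ^ (-r) = 1 := by
        rw [← Real.rpow_add hy]; simp
      linear_combination
        (-((η + 1) ^ r * (η + 1) ^ (-r)) * (‖F (ξ - η)‖ * ‖G η‖)) * e1 +
          (-(‖F (ξ - η)‖ * ‖G η‖)) * e2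
    -- step 3: Hölder
    have h3 : ∫⁻ η in Ioc (0 : ℝ) ξ, (f * g) η
        ≤ (∫⁻ η in Ioc (0 : ℝ) ξ, f η ^ (2 : ℝ)) ^ (1 / 2 : ℝ) *
          (∫⁻ η in Ioc (0 : ℝ) ξ, g η ^ (2 : ℝ)) ^ (1 / 2 : ℝ) :=
      ENNReal.lintegral_mul_le_Lp_mul_Lq _ two_conj' hfm.aemeasurable hgm.aemeasurable
    -- step 4: identify the f-integral
    have h4 : ∫⁻ η in Ioc (0 : ℝ) ξ, f η ^ (2 : ℝ)
        = ∫⁻ η in Ioc (0 : ℝ) ξ, A (ξ - η) * B η := by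
      refine setLIntegral_congr_fun measurableSet_Ioc (fun η hη => ?_)
      obtain ⟨hη0, hηξ⟩ := hη
      have hx : (0 : ℝ) < ξ - η + 1 := by linarith
      have hy : (0 : ℝ) < η + 1 := by linarith
      simp only [hf, hA, hB]
      rw [ENNReal.mul_rpow_of_nonneg _ _ (by norm_num : (0 : ℝ) ≤ 2),
        ENNReal.ofReal_rpow_of_nonneg (by positivity) (by norm_num),
        ENNReal.ofReal_rpow_of_nonneg (by positivity) (by norm_num)]
      rw [sq_helper' hx (norm_nonneg _), sq_helper' hy (norm_nonneg _)]
    -- step 5: bound the g-integral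
    have h5 : ∫⁻ η in Ioc (0 : ℝ) ξ, g η ^ (2 : ℝ)
        ≤ ENNReal.ofReal ((ξ + 1) ^ (1 - 4 * r)) := by
      have hb : ∀ η ∈ Ioc (0 : ℝ) ξ, g η ^ (2 : ℝ)
          ≤ ENNReal.ofReal ((ξ + 1) ^ (-(4 * r))) := by
        intro η hη
        obtain ⟨hη0, hηξ⟩ := hη
        have hx : (0 : ℝ) < ξ - η + 1 := by linarith
        have hy : (0 : ℝ) < η + 1 := by linarith
        rw [hg, ENNReal.ofReal_rpow_of_nonneg (by positivity) (by norm_num)]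
        apply ENNReal.ofReal_le_ofReal
        have hb1 : (ξ - η + 1) ^ (-r) ≤ (ξ + 1) ^ (-r) :=
          Real.rpow_le_rpow hx.le (by linarith) (by linarith)
        have hb2 : (η + 1) ^ (-r) ≤ (ξ + 1) ^ (-r) :=
          Real.rpow_le_rpow hy.le (by linarith) (by linarith)
        calc ((ξ - η + 1) ^ (-r) * (η + 1) ^ (-r)) ^ (2 : ℝ)
            ≤ ((ξ + 1) ^ (-r) * (ξ + 1) ^ (-r)) ^ (2 : ℝ) := by
              apply Real.rpow_le_rpow (by positivity) ?_ (by norm_num)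
              exact mul_le_mul hb1 hb2 (by positivity) (by positivity)
          _ = (ξ + 1) ^ (-(4 * r)) := by
              rw [← Real.rpow_add hξ1, ← Real.rpow_mul hξ1.le]
              congr 1; ring
      calc ∫⁻ η in Ioc (0 : ℝ) ξ, g η ^ (2 : ℝ)
          ≤ ∫⁻ _η in Ioc (0 : ℝ) ξ, ENNReal.ofReal ((ξ + 1) ^ (-(4 * r))) :=
            lintegral_mono_ae ((ae_restrict_iff' measurableSet_Ioc).2 (ae_of_all _ hb))
        _ = ENNReal.ofReal ((ξ + 1) ^ (-(4 * r))) * volume (Ioc (0 : ℝ) ξ) :=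
            setLIntegral_const _ _
        _ = ENNReal.ofReal ((ξ + 1) ^ (-(4 * r))) * ENNReal.ofReal ξ := by
            rw [Real.volume_Ioc, sub_zero]
        _ ≤ ENNReal.ofReal ((ξ + 1) ^ (-(4 * r))) * ENNReal.ofReal (ξ + 1) := by
            gcongr; linarith
        _ = ENNReal.ofReal ((ξ + 1) ^ (1 - 4 * r)) := by
            rw [← ENNReal.ofReal_mul (by positivity)]
            congr 1
            nth_rewrite 2 [show ξ + 1 = (ξ + 1) ^ (1 : ℝ) from (Real.rpow_one _).symm]
            rw [← Real.rpow_add hξ1]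
            ring_nf
    -- assemble the pointwise bound
    calc ENNReal.ofReal ((ξ + 1) ^ (2 * (2 * r - 1)) *
            ‖∫ η in (0 : ℝ)..ξ, F (ξ - η) * G η‖ ^ 2)
        = ENNReal.ofReal ((ξ + 1) ^ (2 * (2 * r - 1))) *
            ENNReal.ofReal ‖∫ η in (0 : ℝ)..ξ, F (ξ - η) * G η‖ ^ 2 := by
          rw [ENNReal.ofReal_mul (by positivity), ENNReal.ofReal_pow (norm_nonneg _)]
      _ ≤ ENNReal.ofReal ((ξ + 1) ^ (2 * (2 * r - 1))) *
            ((∫⁻ η in Ioc (0 : ℝ) ξ, f η ^ (2 : ℝ)) ^ (1 / 2 : ℝ) *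
              (∫⁻ η in Ioc (0 : ℝ) ξ, g η ^ (2 : ℝ)) ^ (1 / 2 : ℝ)) ^ 2 := by
          gcongr
          exact (h1.trans_eq h2).trans h3
      _ = ENNReal.ofReal ((ξ + 1) ^ (2 * (2 * r - 1))) *
            ((∫⁻ η in Ioc (0 : ℝ) ξ, f η ^ (2 : ℝ)) *
              (∫⁻ η in Ioc (0 : ℝ) ξ, g η ^ (2 : ℝ))) := by
          rw [mul_pow, ← ENNReal.rpow_natCast (_ ^ (1 / 2 : ℝ)) 2,
            ← ENNReal.rpow_natCast (_ ^ (1 / 2 : ℝ)) 2, ← ENNReal.rpow_mul,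
            ← ENNReal.rpow_mul]
          norm_num
      _ ≤ ENNReal.ofReal ((ξ + 1) ^ (2 * (2 * r - 1))) *
            ((∫⁻ η in Ioc (0 : ℝ) ξ, A (ξ - η) * B η) *
              ENNReal.ofReal ((ξ + 1) ^ (1 - 4 * r))) := by
          rw [h4]; gcongr
      _ = (ENNReal.ofReal ((ξ + 1) ^ (2 * (2 * r - 1))) *
            ENNReal.ofReal ((ξ + 1) ^ (1 - 4 * r))) *
            ∫⁻ η in Ioc (0 : ℝ) ξ, A (ξ - η) * B η := by ring
      _ ≤ 1 * ∫⁻ η in Ioc (0 : ℝ) ξ, A (ξ - η) * B η := by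
          gcongr
          rw [← ENNReal.ofReal_mul (by positivity), ← Real.rpow_add hξ1]
          refine ENNReal.ofReal_le_one.2 ?_
          exact Real.rpow_le_one_of_one_le_of_nonpos (by linarith) (by linarith)
      _ = ∫⁻ η in Ioc (0 : ℝ) ξ, At (ξ - η) * Bt η := by
          rw [one_mul]
          refine setLIntegral_congr_fun measurableSet_Ioc (fun η hη => ?_)
          obtain ⟨hη0, hηξ⟩ := hη
          rw [hAt, hBt, indicator_of_mem (by simp only [mem_Ici]; linarith),
            indicator_of_mem (mem_Ioi.2 hη0)]
      _ ≤ ∫⁻ η, At (ξ - η) * Bt η := setLIntegral_le_lintegral _ _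
  -- global estimate
  have hprod : Measurable fun p : ℝ × ℝ => At (p.1 - p.2) * Bt p.2 :=
    (hAtm.comp (measurable_fst.sub measurable_snd)).mul (hBtm.comp measurable_snd)
  calc (∫⁻ ξ in Ioi (0 : ℝ),
          ENNReal.ofReal ((ξ + 1) ^ (2 * (2 * r - 1)) *
            ‖∫ η in (0 : ℝ)..ξ, F (ξ - η) * G η‖ ^ 2))
      ≤ ∫⁻ ξ in Ioi (0 : ℝ), ∫⁻ η, At (ξ - η) * Bt η :=
        lintegral_mono_ae ((ae_restrict_iff' measurableSet_Ioi).2 (ae_of_all _ key))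
    _ ≤ ∫⁻ ξ, ∫⁻ η, At (ξ - η) * Bt η := setLIntegral_le_lintegral _ _
    _ = ∫⁻ η, ∫⁻ ξ, At (ξ - η) * Bt η := lintegral_lintegral_swap hprod.aemeasurable
    _ = ∫⁻ η, (∫⁻ ξ, At (ξ - η)) * Bt η := by
        refine lintegral_congr fun η => ?_
        exact lintegral_mul_const _ (hAtm.comp (measurable_id.sub_const η))
    _ = ∫⁻ η, (∫⁻ ξ, At ξ) * Bt η := by
        refine lintegral_congr fun η => ?_
        congr 1
        exact lintegral_sub_right_eq_self At η
    _ = (∫⁻ ξ, At ξ) * ∫⁻ η, Bt η := lintegral_const_mul _ hBtm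
    _ = (∫⁻ ξ in Ioi (0 : ℝ), A ξ) * ∫⁻ ξ in Ioi (0 : ℝ), B ξ := by
        rw [hAt, hBt, lintegral_indicator measurableSet_Ici A,
          lintegral_indicator measurableSet_Ioi B,
          Measure.restrict_congr_set Ioi_ae_eq_Ici]
end

section
/- Fix s ∈ (−1/2, 0) and set ε = (1/2 + s)/2, so ε ∈ (0, 1/4). There exists a constant C > 0 (depending only on s) such that for all κ ≥ 1 and all measurable functions Q : ℝ → ℂ and F : [0,∞) → ℂ, one has ∫_0^∞ (ξ+1)^{2s} | ∫_0^∞ Q(ξ-η) F(η)/(η+κ) dη |² dξ ≤ C κ^{-4ε} (∫_ℝ (|ξ|+1)^{2s} |Q(ξ)|² dξ) (∫_0^∞ (ξ+κ)^{2s} |F(ξ)|² dξ). (This is the Fourier-side form of the estimate ‖C₊ q R₀(κ) C₊ f‖_{H^s} ≲ κ^{-2ε} ‖q‖_{H^s} ‖f₊‖_{H^s_κ}, where R₀(κ) is the free resolvent (−i∂ + κ)^{-1} on the Hardy space.) -/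
open MeasureTheory Set ENNReal Real


lemma shiftIoi (g : ℝ → ℝ≥0∞) (c : ℝ) :
    ∫⁻ x in Ioi c, g x = ∫⁻ x in Ioi 0, g (x + c) := by
  rw [← lintegral_indicator measurableSet_Ioi, ← lintegral_indicator measurableSet_Ioi,
    ← lintegral_add_right_eq_self (fun x => (Ioi c).indicator g x) c]
  congr 1; ext x
  simp only [indicator, mem_Ioi]
  have : c < x + c ↔ 0 < x := by constructor <;> intro h <;> linarith
  simp only [this]

lemma tailL1 {θ a : ℝ} (hθ : 0 < θ) (ha : 0 < a) :
    ∫⁻ x in Ioi (0:ℝ), ENNReal.ofReal ((x + a) ^ (-1 - θ)) = ENNReal.ofReal (a ^ (-θ) / θ) := by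
  have h1 : ∫⁻ x in Ioi a, ENNReal.ofReal (x ^ (-1 - θ))
      = ∫⁻ x in Ioi (0:ℝ), ENNReal.ofReal ((x + a) ^ (-1 - θ)) :=
    shiftIoi (fun x => ENNReal.ofReal (x ^ (-1 - θ))) a
  rw [← h1, ← ofReal_integral_eq_lintegral_ofReal
    (integrableOn_Ioi_rpow_of_lt (by linarith) ha) ?_]
  · rw [integral_Ioi_rpow_of_lt (by linarith) ha]
    have : (-1 - θ) + 1 = -θ := by ring
    rw [this]
    congr 1
    field_simp
  · filter_upwards [ae_restrict_mem measurableSet_Ioi] with x hx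
    exact rpow_nonneg (le_of_lt (lt_trans ha hx)) _

lemma bulkL2 {p b : ℝ} (hp : -1 < p) (hp0 : p < 0) (hb : 0 ≤ b) :
    ∫⁻ u in Ioc (0:ℝ) b, ENNReal.ofReal ((u + 1) ^ p) ≤ ENNReal.ofReal ((b + 1) ^ (p + 1) / (p + 1)) := by
  have hcont : ContinuousOn (fun u : ℝ => (u + 1) ^ p) (Icc 0 b) := by
    intro x hx
    apply ContinuousWithinAt.mono (t := Icc 0 b) ?_ le_rfl
    apply ContinuousAt.continuousWithinAt
    exact ContinuousAt.rpow_const (by fun_prop) (Or.inl (by nlinarith [hx.1] : x + 1 ≠ 0))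
  have hint : IntegrableOn (fun u : ℝ => (u + 1) ^ p) (Ioc 0 b) :=
    (hcont.integrableOn_Icc).mono_set Ioc_subset_Icc_self
  rw [← ofReal_integral_eq_lintegral_ofReal hint ?_]
  · apply ENNReal.ofReal_le_ofReal
    rw [← intervalIntegral.integral_of_le hb]
    rw [show (∫ u in (0:ℝ)..b, (u+1:ℝ) ^ p) = ∫ y in (0+1:ℝ)..(b+1:ℝ), y ^ p from
      intervalIntegral.integral_comp_add_right (fun y : ℝ => y ^ p) 1]
    rw [integral_rpow (Or.inl hp)]
    have h1 : (0:ℝ) + 1 = 1 := by norm_num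
    rw [h1, Real.one_rpow]
    have hple : 0 < p + 1 := by linarith
    apply div_le_div_of_nonneg_right (by linarith) hple.le
  · filter_upwards [ae_restrict_mem measurableSet_Ioc] with x hx
    exact rpow_nonneg (by linarith [hx.1]) _

lemma amgm {κ b θ : ℝ} (hκ : 1 ≤ κ) (hb : 1 ≤ b) (hθ0 : 0 ≤ θ) (hθ1 : θ ≤ 1) :
    κ ^ θ * b ^ (1 - θ) ≤ b - 1 + κ := by
  have hκ0 : (0:ℝ) < κ := by linarith
  have hb0 : (0:ℝ) < b := by linarith
  rcases le_total κ b with h | h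
  · have h1 : κ ^ θ ≤ b ^ θ := rpow_le_rpow hκ0.le h hθ0
    have h2 : κ ^ θ * b ^ (1 - θ) ≤ b ^ θ * b ^ (1 - θ) :=
      mul_le_mul_of_nonneg_right h1 (rpow_nonneg hb0.le _)
    have h3 : b ^ θ * b ^ (1 - θ) = b := by rw [← Real.rpow_add hb0]; norm_num
    linarith
  · have h1 : b ^ (1 - θ) ≤ κ ^ (1 - θ) := rpow_le_rpow hb0.le h (by linarith)
    have h2 : κ ^ θ * b ^ (1 - θ) ≤ κ ^ θ * κ ^ (1 - θ) :=
      mul_le_mul_of_nonneg_left h1 (rpow_nonneg hκ0.le _)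
    have h3 : κ ^ θ * κ ^ (1 - θ) = κ := by rw [← Real.rpow_add hκ0]; norm_num
    linarith

lemma keyK {p : ℝ} (hp : -1 < p) (hp0 : p < 0) {κ : ℝ} (hκ : 1 ≤ κ) (ζ : ℝ) :
    (∫⁻ η in Ioi (0:ℝ), (if 0 < ζ + η then ENNReal.ofReal ((ζ + η + 1) ^ p) else 0) *
      ENNReal.ofReal ((η + κ) ^ (-2 - p)))
    ≤ ENNReal.ofReal ((3 / (p + 1)) * κ ^ (-(p+1)) * (|ζ| + 1) ^ p) := by
  have hκ0 : (0:ℝ) < κ := by linarith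
  have hθ : (0:ℝ) < p + 1 := by linarith
  have hexp : (-2 - p : ℝ) = -1 - (p + 1) := by ring
  rcases le_or_gt 0 ζ with hζ | hζ
  · -- easy case
    have habs : |ζ| = ζ := abs_of_nonneg hζ
    calc ∫⁻ η in Ioi (0:ℝ), (if 0 < ζ + η then ENNReal.ofReal ((ζ + η + 1) ^ p) else 0) *
            ENNReal.ofReal ((η + κ) ^ (-2 - p))
        ≤ ∫⁻ η in Ioi (0:ℝ), ENNReal.ofReal ((ζ + 1) ^ p) * ENNReal.ofReal ((η + κ) ^ (-2 - p)) := by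
          apply setLIntegral_mono' measurableSet_Ioi
          intro η hη
          gcongr
          split_ifs with h
          · exact ENNReal.ofReal_le_ofReal
              (rpow_le_rpow_of_nonpos (by linarith) (by linarith [mem_Ioi.mp hη]) hp0.le)
          · exact zero_le
      _ = ENNReal.ofReal ((ζ + 1) ^ p) * ENNReal.ofReal (κ ^ (-(p+1)) / (p + 1)) := by
          rw [lintegral_const_mul' _ _ ENNReal.ofReal_ne_top]
          congr 1
          rw [show (fun η : ℝ => ENNReal.ofReal ((η + κ) ^ (-2 - p)))
              = fun η : ℝ => ENNReal.ofReal ((η + κ) ^ (-1 - (p+1))) by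
            funext η; rw [hexp]]
          exact tailL1 hθ hκ0
      _ ≤ ENNReal.ofReal ((3 / (p + 1)) * κ ^ (-(p+1)) * (|ζ| + 1) ^ p) := by
          rw [← ENNReal.ofReal_mul (rpow_nonneg (by linarith) _), habs]
          apply ENNReal.ofReal_le_ofReal
          have h1 : (0:ℝ) ≤ (ζ+1) ^ p * κ ^ (-(p+1)) := by positivity
          have h2 : (ζ + 1) ^ p * (κ ^ (-(p+1)) / (p + 1))
              = (1 / (p+1)) * κ ^ (-(p+1)) * (ζ + 1) ^ p := by ring
          rw [h2]
          apply mul_le_mul_of_nonneg_right ?_ (rpow_nonneg (by linarith) _)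
          apply mul_le_mul_of_nonneg_right ?_ (rpow_nonneg hκ0.le _)
          apply div_le_div_of_nonneg_right (by norm_num) hθ.le
  · -- hard case ζ < 0
    have hb : (0:ℝ) < -ζ := by linarith
    have habs : |ζ| = -ζ := abs_of_neg hζ
    have ha0 : (0:ℝ) < -ζ + κ := by linarith
    have ha1 : (1:ℝ) ≤ -ζ + κ := by linarith
    set b : ℝ := -ζ with hbdef
    set G : ℝ → ℝ≥0∞ := fun η => ENNReal.ofReal ((ζ + η + 1) ^ p) *
        ENNReal.ofReal ((η + κ) ^ (-2 - p)) with hGdef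
    have hstep : (∫⁻ η in Ioi (0:ℝ), (if 0 < ζ + η then ENNReal.ofReal ((ζ + η + 1) ^ p) else 0) *
          ENNReal.ofReal ((η + κ) ^ (-2 - p)))
        = ∫⁻ u in Ioi (0:ℝ),
            ENNReal.ofReal ((u + 1) ^ p) * ENNReal.ofReal ((u + (b + κ)) ^ (-2 - p)) := by
      have h1 : ∀ η : ℝ, (if 0 < ζ + η then ENNReal.ofReal ((ζ + η + 1) ^ p) else 0) *
            ENNReal.ofReal ((η + κ) ^ (-2 - p)) = (Ioi b).indicator G η := by
        intro η
        have hiff : (0 < ζ + η) ↔ (b < η) := by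
          rw [hbdef]; constructor <;> intro h <;> linarith
        simp only [indicator, mem_Ioi, hGdef]
        split_ifs with h₁ h₂ h₂
        · rfl
        · exact absurd (hiff.mp h₁) h₂
        · exact absurd (hiff.mpr h₂) h₁
        · rw [zero_mul]
      calc (∫⁻ η in Ioi (0:ℝ), (if 0 < ζ + η then ENNReal.ofReal ((ζ + η + 1) ^ p) else 0) *
              ENNReal.ofReal ((η + κ) ^ (-2 - p)))
          = ∫⁻ η in Ioi (0:ℝ), (Ioi b).indicator G η := by
            apply lintegral_congr; intro η; exact h1 η
        _ = ∫⁻ η, (Ioi (0:ℝ)).indicator ((Ioi b).indicator G) η :=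
            (lintegral_indicator measurableSet_Ioi _).symm
        _ = ∫⁻ η, (Ioi b).indicator G η := by
            rw [indicator_indicator, Ioi_inter_Ioi, max_eq_right hb.le]
        _ = ∫⁻ η in Ioi b, G η := lintegral_indicator measurableSet_Ioi _
        _ = ∫⁻ u in Ioi (0:ℝ), G (u + b) := shiftIoi G b
        _ = ∫⁻ u in Ioi (0:ℝ),
              ENNReal.ofReal ((u + 1) ^ p) * ENNReal.ofReal ((u + (b + κ)) ^ (-2 - p)) := by
            apply lintegral_congr; intro u
            rw [hGdef]
            have e1 : ζ + (u + b) + 1 = u + 1 := by rw [hbdef]; ring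
            have e2 : (u + b) + κ = u + (b + κ) := by ring
            simp only [e1, e2]
    rw [hstep, show Ioi (0:ℝ) = Ioc 0 (b+κ) ∪ Ioi (b+κ) from (Ioc_union_Ioi_eq_Ioi ha0.le).symm,
      lintegral_union measurableSet_Ioi (Ioc_disjoint_Ioi le_rfl)]
    have hpart1 : (∫⁻ u in Ioc (0:ℝ) (b+κ),
          ENNReal.ofReal ((u + 1) ^ p) * ENNReal.ofReal ((u + (b + κ)) ^ (-2 - p)))
        ≤ ENNReal.ofReal (2/(p+1) * κ^(-(p+1)) * (b+1)^p) := by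
      calc (∫⁻ u in Ioc (0:ℝ) (b+κ),
              ENNReal.ofReal ((u + 1) ^ p) * ENNReal.ofReal ((u + (b + κ)) ^ (-2 - p)))
          ≤ ∫⁻ u in Ioc (0:ℝ) (b+κ),
              ENNReal.ofReal ((u + 1) ^ p) * ENNReal.ofReal ((b + κ) ^ (-2 - p)) := by
            apply setLIntegral_mono' measurableSet_Ioc
            intro u hu
            exact mul_le_mul_right (ENNReal.ofReal_le_ofReal
              (rpow_le_rpow_of_nonpos ha0 (by linarith [hu.1]) (by linarith))) _
        _ = (∫⁻ u in Ioc (0:ℝ) (b+κ), ENNReal.ofReal ((u + 1) ^ p)) *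
              ENNReal.ofReal ((b + κ) ^ (-2 - p)) :=
            lintegral_mul_const'' _ (by fun_prop)
        _ ≤ ENNReal.ofReal (((b+κ)+1)^(p+1)/(p+1)) * ENNReal.ofReal ((b + κ) ^ (-2 - p)) := by
            gcongr
            exact bulkL2 hp hp0 ha0.le
        _ ≤ ENNReal.ofReal (2/(p+1) * κ^(-(p+1)) * (b+1)^p) := by
            rw [← ENNReal.ofReal_mul (by positivity)]
            apply ENNReal.ofReal_le_ofReal
            have h1 : ((b+κ)+1)^(p+1) ≤ 2 * (b+κ)^(p+1) := by
              calc ((b+κ)+1)^(p+1) ≤ (2*(b+κ))^(p+1) :=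
                    rpow_le_rpow (by linarith) (by linarith) hθ.le
                _ = 2^(p+1) * (b+κ)^(p+1) := mul_rpow (by norm_num) ha0.le
                _ ≤ 2 * (b+κ)^(p+1) := by
                    apply mul_le_mul_of_nonneg_right ?_ (rpow_nonneg ha0.le _)
                    calc (2:ℝ)^(p+1) ≤ 2^(1:ℝ) :=
                          rpow_le_rpow_of_exponent_le one_le_two (by linarith)
                      _ = 2 := Real.rpow_one 2
            have h2 : (b+κ)^(p+1) * (b+κ)^(-2-p) = (b+κ)⁻¹ := by
              rw [← Real.rpow_add ha0, show (p+1) + (-2-p) = (-1 : ℝ) by ring, Real.rpow_neg_one]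
            have h3 : (b+κ)⁻¹ ≤ κ^(-(p+1)) * (b+1)^p := by
              have hamgm := amgm hκ (by linarith : (1:ℝ) ≤ b + 1) hθ.le
                (by linarith : p + 1 ≤ 1)
              have e3 : (1 : ℝ) - (p+1) = -p := by ring
              rw [e3] at hamgm
              have e4 : b + 1 - 1 + κ = b + κ := by ring
              rw [e4] at hamgm
              have hpos : (0:ℝ) < κ^(p+1) * (b+1)^(-p) := by positivity
              calc (b+κ)⁻¹ ≤ (κ^(p+1) * (b+1)^(-p))⁻¹ := by
                    apply inv_anti₀ hpos hamgm
                _ = κ^(-(p+1)) * (b+1)^p := by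
                    rw [mul_inv, ← Real.rpow_neg hκ0.le, ← Real.rpow_neg (by linarith), neg_neg]
            calc ((b+κ)+1)^(p+1)/(p+1) * (b+κ)^(-2-p)
                = ((b+κ)+1)^(p+1) * (b+κ)^(-2-p) * (1/(p+1)) := by ring
              _ ≤ 2 * (b+κ)^(p+1) * (b+κ)^(-2-p) * (1/(p+1)) := by
                  apply mul_le_mul_of_nonneg_right ?_ (by positivity)
                  exact mul_le_mul_of_nonneg_right h1 (rpow_nonneg ha0.le _)
              _ = 2 * (b+κ)⁻¹ * (1/(p+1)) := by rw [mul_assoc 2, h2]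
              _ ≤ 2 * (κ^(-(p+1)) * (b+1)^p) * (1/(p+1)) := by
                  apply mul_le_mul_of_nonneg_right ?_ (by positivity)
                  linarith
              _ = 2/(p+1) * κ^(-(p+1)) * (b+1)^p := by ring
    have hpart2 : (∫⁻ u in Ioi (b+κ),
          ENNReal.ofReal ((u + 1) ^ p) * ENNReal.ofReal ((u + (b + κ)) ^ (-2 - p)))
        ≤ ENNReal.ofReal (1/(p+1) * κ^(-(p+1)) * (b+1)^p) := by
      calc (∫⁻ u in Ioi (b+κ),
              ENNReal.ofReal ((u + 1) ^ p) * ENNReal.ofReal ((u + (b + κ)) ^ (-2 - p)))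
          ≤ ∫⁻ u in Ioi (b+κ),
              ENNReal.ofReal ((b + 1) ^ p) * ENNReal.ofReal ((u + (b + κ)) ^ (-2 - p)) := by
            apply setLIntegral_mono' measurableSet_Ioi
            intro u hu
            exact mul_le_mul_left (ENNReal.ofReal_le_ofReal
              (rpow_le_rpow_of_nonpos (by linarith : (0:ℝ) < b + 1)
                (by linarith [mem_Ioi.mp hu] : b + 1 ≤ u + 1) hp0.le)) _
        _ ≤ ∫⁻ u in Ioi (0:ℝ),
              ENNReal.ofReal ((b + 1) ^ p) * ENNReal.ofReal ((u + (b + κ)) ^ (-2 - p)) :=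
            lintegral_mono_set (Ioi_subset_Ioi ha0.le)
        _ = ENNReal.ofReal ((b + 1) ^ p) *
              ∫⁻ u in Ioi (0:ℝ), ENNReal.ofReal ((u + (b + κ)) ^ (-1 - (p+1))) := by
            rw [lintegral_const_mul' _ _ ENNReal.ofReal_ne_top]
            congr 1
            apply lintegral_congr
            intro u
            rw [hexp]
        _ = ENNReal.ofReal ((b + 1) ^ p) * ENNReal.ofReal ((b+κ)^(-(p+1))/(p+1)) := by
            rw [tailL1 hθ ha0]
        _ ≤ ENNReal.ofReal (1/(p+1) * κ^(-(p+1)) * (b+1)^p) := by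
            rw [← ENNReal.ofReal_mul (rpow_nonneg (by linarith) _)]
            apply ENNReal.ofReal_le_ofReal
            have h4 : (b+κ)^(-(p+1)) ≤ κ^(-(p+1)) :=
              rpow_le_rpow_of_nonpos hκ0 (by linarith) (by linarith)
            calc (b + 1) ^ p * ((b+κ)^(-(p+1))/(p+1))
                ≤ (b + 1) ^ p * (κ^(-(p+1))/(p+1)) := by
                  apply mul_le_mul_of_nonneg_left ?_ (rpow_nonneg (by linarith) _)
                  exact div_le_div_of_nonneg_right h4 hθ.le
              _ = 1/(p+1) * κ^(-(p+1)) * (b+1)^p := by ring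
    calc (∫⁻ u in Ioc (0:ℝ) (b+κ),
            ENNReal.ofReal ((u + 1) ^ p) * ENNReal.ofReal ((u + (b + κ)) ^ (-2 - p)))
          + ∫⁻ u in Ioi (b+κ),
            ENNReal.ofReal ((u + 1) ^ p) * ENNReal.ofReal ((u + (b + κ)) ^ (-2 - p))
        ≤ ENNReal.ofReal (2/(p+1) * κ^(-(p+1)) * (b+1)^p)
            + ENNReal.ofReal (1/(p+1) * κ^(-(p+1)) * (b+1)^p) := add_le_add hpart1 hpart2
      _ = ENNReal.ofReal ((3 / (p + 1)) * κ ^ (-(p+1)) * (|ζ| + 1) ^ p) := by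
          rw [← ENNReal.ofReal_add (by positivity) (by positivity), habs]
          congr 1
          ring


lemma step1 {s κ : ℝ} (hκ0 : 0 < κ)
    {Q F : ℝ → ℂ} (hQ : Measurable Q) (hF : Measurable F) (ξ : ℝ) :
    ENNReal.ofReal (‖∫ η in Ioi (0:ℝ), Q (ξ - η) * F η / ((η + κ : ℝ) : ℂ)‖ ^ 2)
      ≤ (∫⁻ η in Ioi (0:ℝ), ENNReal.ofReal (‖Q (ξ - η)‖^2 * (η + κ) ^ (-2 - 2*s))) *
        (∫⁻ η in Ioi (0:ℝ), ENNReal.ofReal ((η + κ) ^ (2*s) * ‖F η‖^2)) := by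
  set f : ℝ → ℝ≥0∞ := fun η => ENNReal.ofReal (‖Q (ξ - η)‖ * (η + κ) ^ (-1 - s)) with hfdef
  set g : ℝ → ℝ≥0∞ := fun η => ENNReal.ofReal ((η + κ) ^ s * ‖F η‖) with hgdef
  set M : ℝ≥0∞ := ∫⁻ η in Ioi (0:ℝ), ENNReal.ofReal ‖Q (ξ - η) * F η / ((η + κ : ℝ) : ℂ)‖
    with hMdef
  set A : ℝ≥0∞ := ∫⁻ η in Ioi (0:ℝ), ENNReal.ofReal (‖Q (ξ - η)‖^2 * (η + κ) ^ (-2 - 2*s))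
    with hAdef
  set B : ℝ≥0∞ := ∫⁻ η in Ioi (0:ℝ), ENNReal.ofReal ((η + κ) ^ (2*s) * ‖F η‖^2) with hBdef
  have hM : M = ∫⁻ η in Ioi (0:ℝ), (f * g) η := by
    apply setLIntegral_congr_fun_ae measurableSet_Ioi
    filter_upwards with η hη
    have h0 : (0:ℝ) < η + κ := by linarith [mem_Ioi.mp hη]
    have hrp : (η+κ) ^ (-1-s) * (η+κ) ^ s = (η+κ)⁻¹ := by
      rw [← Real.rpow_add h0, show -1-s+s = (-1:ℝ) by ring, Real.rpow_neg_one]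
    simp only [Pi.mul_apply, hfdef, hgdef]
    rw [← ENNReal.ofReal_mul (by positivity)]
    congr 1
    rw [norm_div, norm_mul, Complex.norm_real, Real.norm_eq_abs, abs_of_pos h0,
      div_eq_mul_inv, ← hrp]
    ring
  have hfm : AEMeasurable f (volume.restrict (Ioi (0:ℝ))) := by
    apply Measurable.aemeasurable; fun_prop
  have hgm : AEMeasurable g (volume.restrict (Ioi (0:ℝ))) := by
    apply Measurable.aemeasurable; fun_prop
  have hHolder := ENNReal.lintegral_mul_le_Lp_mul_Lq (volume.restrict (Ioi (0:ℝ)))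
    Real.HolderConjugate.two_two hfm hgm
  have hA2 : ∫⁻ η in Ioi (0:ℝ), f η ^ (2:ℝ) = A := by
    apply setLIntegral_congr_fun_ae measurableSet_Ioi
    filter_upwards with η hη
    have h0 : (0:ℝ) < η + κ := by linarith [mem_Ioi.mp hη]
    simp only [hfdef]
    rw [ENNReal.ofReal_rpow_of_nonneg (by positivity) (by norm_num)]
    congr 1
    rw [show (2:ℝ) = ((2:ℕ):ℝ) by norm_num, Real.rpow_natCast, mul_pow,
      ← Real.rpow_natCast ((η+κ) ^ (-1-s)) 2, ← Real.rpow_mul h0.le]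
    norm_num
    exact Or.inl (by rw [show (-1-s) * (2:ℝ) = -2-2*s by ring])
  have hB2 : ∫⁻ η in Ioi (0:ℝ), g η ^ (2:ℝ) = B := by
    apply setLIntegral_congr_fun_ae measurableSet_Ioi
    filter_upwards with η hη
    have h0 : (0:ℝ) < η + κ := by linarith [mem_Ioi.mp hη]
    simp only [hgdef]
    rw [ENNReal.ofReal_rpow_of_nonneg (by positivity) (by norm_num)]
    congr 1
    rw [show (2:ℝ) = ((2:ℕ):ℝ) by norm_num, Real.rpow_natCast, mul_pow,
      ← Real.rpow_natCast ((η+κ) ^ s) 2, ← Real.rpow_mul h0.le]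
    norm_num
    exact Or.inl (by rw [mul_comm])
  rw [← hM, hA2, hB2] at hHolder
  -- now: M' ≤ A^(1/2) * B^(1/2)
  have hnormI : ‖∫ η in Ioi (0:ℝ), Q (ξ - η) * F η / ((η + κ : ℝ) : ℂ)‖ ≤ M.toReal := by
    exact norm_integral_le_lintegral_norm _
  calc ENNReal.ofReal (‖∫ η in Ioi (0:ℝ), Q (ξ - η) * F η / ((η + κ : ℝ) : ℂ)‖ ^ 2)
      ≤ ENNReal.ofReal (M.toReal ^ 2) := by
        apply ENNReal.ofReal_le_ofReal
        exact pow_le_pow_left₀ (norm_nonneg _) hnormI 2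
    _ = ENNReal.ofReal M.toReal * ENNReal.ofReal M.toReal := by
        rw [pow_two, ENNReal.ofReal_mul ENNReal.toReal_nonneg]
    _ ≤ M * M :=
        mul_le_mul' ENNReal.ofReal_toReal_le ENNReal.ofReal_toReal_le
    _ ≤ (A ^ (1/(2:ℝ)) * B ^ (1/(2:ℝ))) * (A ^ (1/(2:ℝ)) * B ^ (1/(2:ℝ))) :=
        mul_le_mul' hHolder hHolder
    _ = (A ^ (1/(2:ℝ)) * A ^ (1/(2:ℝ))) * (B ^ (1/(2:ℝ)) * B ^ (1/(2:ℝ))) := by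
        ring
    _ = A * B := by
        rw [← ENNReal.rpow_add_of_nonneg (1/2) (1/2) (by norm_num) (by norm_num),
          ← ENNReal.rpow_add_of_nonneg (1/2) (1/2) (by norm_num) (by norm_num)]
        norm_num


/-- Fourier-side form of `‖C₊ q R₀(κ) C₊ f‖_{H^s} ≲ κ^{-2ε} ‖q‖_{H^s} ‖f₊‖_{H^s_κ}`
for `s ∈ (-1/2, 0)` and `ε = (1/2+s)/2`. -/
theorem stmt2 (s : ℝ) (hs : s ∈ Set.Ioo (-(1/2) : ℝ) 0) :
    ∃ C : ℝ, 0 < C ∧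
      ∀ κ : ℝ, 1 ≤ κ →
        ∀ Q F : ℝ → ℂ, Measurable Q → Measurable F →
          (∫⁻ ξ in Ioi (0 : ℝ),
              ENNReal.ofReal ((ξ + 1) ^ (2 * s) *
                ‖∫ η in Ioi (0 : ℝ), Q (ξ - η) * F η / ((η + κ : ℝ) : ℂ)‖ ^ 2))
            ≤ ENNReal.ofReal (C * κ ^ (-(4 * ((1/2 + s) / 2)))) *
                (∫⁻ ξ : ℝ, ENNReal.ofReal ((|ξ| + 1) ^ (2 * s) * ‖Q ξ‖ ^ 2)) *
                (∫⁻ ξ in Ioi (0 : ℝ), ENNReal.ofReal ((ξ + κ) ^ (2 * s) * ‖F ξ‖ ^ 2)) := by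
  obtain ⟨hs1, hs2⟩ := hs
  have hθ : (0:ℝ) < 2*s + 1 := by linarith
  refine ⟨3 / (2*s + 1), by positivity, ?_⟩
  intro κ hκ Q F hQ hF
  have hκ0 : (0:ℝ) < κ := lt_of_lt_of_le one_pos hκ
  have hp : (-1:ℝ) < 2*s := by linarith
  have hp0 : 2*s < (0:ℝ) := by linarith
  set B : ℝ≥0∞ := ∫⁻ ξ in Ioi (0 : ℝ), ENNReal.ofReal ((ξ + κ) ^ (2 * s) * ‖F ξ‖ ^ 2)
    with hBdef
  set NQ : ℝ≥0∞ := ∫⁻ ξ : ℝ, ENNReal.ofReal ((|ξ| + 1) ^ (2 * s) * ‖Q ξ‖ ^ 2) with hNQdef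
  set c : ℝ → ℝ≥0∞ := fun ξ => ENNReal.ofReal ((ξ + 1) ^ (2*s)) with hcdef
  set A : ℝ → ℝ≥0∞ :=
    fun ξ => ∫⁻ η in Ioi (0:ℝ), ENNReal.ofReal (‖Q (ξ - η)‖^2 * (η + κ) ^ (-2 - 2*s))
    with hAdef
  set T : ℝ≥0∞ := ∫⁻ ξ in Ioi (0:ℝ), c ξ * A ξ with hTdef
  -- Step 1 : LHS ≤ T * B
  have h1 : (∫⁻ ξ in Ioi (0 : ℝ),
        ENNReal.ofReal ((ξ + 1) ^ (2 * s) *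
          ‖∫ η in Ioi (0 : ℝ), Q (ξ - η) * F η / ((η + κ : ℝ) : ℂ)‖ ^ 2))
      ≤ ∫⁻ ξ in Ioi (0:ℝ), (c ξ * A ξ) * B := by
    apply setLIntegral_mono' measurableSet_Ioi
    intro ξ hξ
    have hξ0 : (0:ℝ) < ξ := mem_Ioi.mp hξ
    rw [ENNReal.ofReal_mul (rpow_nonneg (by linarith) _), mul_assoc]
    exact mul_le_mul_right (step1 hκ0 hQ hF ξ) _
  -- measurability of c * A
  have hmA : Measurable A := by
    apply Measurable.lintegral_prod_right (f := fun ξ η =>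
      ENNReal.ofReal (‖Q (ξ - η)‖^2 * (η + κ) ^ (-2 - 2*s)))
    fun_prop
  have hmcA : Measurable fun ξ => c ξ * A ξ := by
    apply Measurable.mul ?_ hmA
    fun_prop
  have h2 : (∫⁻ ξ in Ioi (0:ℝ), (c ξ * A ξ) * B) = T * B :=
    lintegral_mul_const'' _ hmcA.aemeasurable
  -- Step 2 : T rearrangement
  have h3 : T = ∫⁻ ξ in Ioi (0:ℝ), ∫⁻ η in Ioi (0:ℝ),
      (c ξ * ENNReal.ofReal (‖Q (ξ - η)‖^2)) * ENNReal.ofReal ((η + κ) ^ (-2 - 2*s)) := by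
    rw [hTdef]
    apply lintegral_congr
    intro ξ
    rw [hAdef, ← lintegral_const_mul' _ _ ENNReal.ofReal_ne_top]
    apply lintegral_congr
    intro η
    rw [ENNReal.ofReal_mul (by positivity), mul_assoc]
  have hswap1 : (∫⁻ ξ in Ioi (0:ℝ), ∫⁻ η in Ioi (0:ℝ),
        (c ξ * ENNReal.ofReal (‖Q (ξ - η)‖^2)) * ENNReal.ofReal ((η + κ) ^ (-2 - 2*s)))
      = ∫⁻ η in Ioi (0:ℝ), ∫⁻ ξ in Ioi (0:ℝ),
        (c ξ * ENNReal.ofReal (‖Q (ξ - η)‖^2)) * ENNReal.ofReal ((η + κ) ^ (-2 - 2*s)) := by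
    apply lintegral_lintegral_swap
    apply Measurable.aemeasurable
    simp only [Function.uncurry, hcdef]
    fun_prop
  -- Step 3 : shift inner integral
  have hshift : ∀ η : ℝ, (∫⁻ ξ in Ioi (0:ℝ), c ξ * ENNReal.ofReal (‖Q (ξ - η)‖^2))
      = ∫⁻ ζ, (if 0 < ζ + η then ENNReal.ofReal ((ζ + η + 1) ^ (2*s)) else 0) *
          ENNReal.ofReal (‖Q ζ‖^2) := by
    intro η
    calc (∫⁻ ξ in Ioi (0:ℝ), c ξ * ENNReal.ofReal (‖Q (ξ - η)‖^2))
        = ∫⁻ x in Ioi (0:ℝ), (fun ζ => c (ζ + η) * ENNReal.ofReal (‖Q (ζ + η - η)‖^2)) (x + -η) := by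
          apply lintegral_congr; intro x
          exact (congrArg (fun t => c t * ENNReal.ofReal (‖Q (t - η)‖^2))
            (by ring : x + -η + η = x)).symm
      _ = ∫⁻ ζ in Ioi (-η), c (ζ + η) * ENNReal.ofReal (‖Q (ζ + η - η)‖^2) :=
          (shiftIoi (fun ζ => c (ζ + η) * ENNReal.ofReal (‖Q (ζ + η - η)‖^2)) (-η)).symm
      _ = ∫⁻ ζ, (Ioi (-η)).indicator
            (fun ζ => c (ζ + η) * ENNReal.ofReal (‖Q (ζ + η - η)‖^2)) ζ :=
          (lintegral_indicator measurableSet_Ioi _).symm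
      _ = ∫⁻ ζ, (if 0 < ζ + η then ENNReal.ofReal ((ζ + η + 1) ^ (2*s)) else 0) *
            ENNReal.ofReal (‖Q ζ‖^2) := by
          apply lintegral_congr; intro ζ
          have e1 : ζ + η - η = ζ := by ring
          simp only [indicator, mem_Ioi, hcdef, e1]
          have hiff : (-η < ζ) = (0 < ζ + η) := propext (by constructor <;> intro h <;> linarith)
          rw [ite_mul, zero_mul]
          exact if_congr (iff_of_eq hiff) rfl rfl
  -- Step 4 : combine, swap again, apply keyK
  have h4 : T = ∫⁻ ζ, ENNReal.ofReal (‖Q ζ‖^2) *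
      ∫⁻ η in Ioi (0:ℝ), (if 0 < ζ + η then ENNReal.ofReal ((ζ + η + 1) ^ (2*s)) else 0) *
        ENNReal.ofReal ((η + κ) ^ (-2 - 2*s)) := by
    rw [h3, hswap1]
    have e2 : ∀ η : ℝ, (∫⁻ ξ in Ioi (0:ℝ),
          (c ξ * ENNReal.ofReal (‖Q (ξ - η)‖^2)) * ENNReal.ofReal ((η + κ) ^ (-2 - 2*s)))
        = ∫⁻ ζ, ((if 0 < ζ + η then ENNReal.ofReal ((ζ + η + 1) ^ (2*s)) else 0) *
            ENNReal.ofReal (‖Q ζ‖^2)) * ENNReal.ofReal ((η + κ) ^ (-2 - 2*s)) := by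
      intro η
      rw [lintegral_mul_const' _ _ ENNReal.ofReal_ne_top, hshift η,
        lintegral_mul_const' _ _ ENNReal.ofReal_ne_top]
    calc (∫⁻ η in Ioi (0:ℝ), ∫⁻ ξ in Ioi (0:ℝ),
            (c ξ * ENNReal.ofReal (‖Q (ξ - η)‖^2)) * ENNReal.ofReal ((η + κ) ^ (-2 - 2*s)))
        = ∫⁻ η in Ioi (0:ℝ), ∫⁻ ζ,
            ((if 0 < ζ + η then ENNReal.ofReal ((ζ + η + 1) ^ (2*s)) else 0) *
              ENNReal.ofReal (‖Q ζ‖^2)) * ENNReal.ofReal ((η + κ) ^ (-2 - 2*s)) := by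
          apply lintegral_congr; intro η; exact e2 η
      _ = ∫⁻ ζ, ∫⁻ η in Ioi (0:ℝ),
            ((if 0 < ζ + η then ENNReal.ofReal ((ζ + η + 1) ^ (2*s)) else 0) *
              ENNReal.ofReal (‖Q ζ‖^2)) * ENNReal.ofReal ((η + κ) ^ (-2 - 2*s)) := by
          apply lintegral_lintegral_swap
          apply Measurable.aemeasurable
          show Measurable fun p : ℝ × ℝ =>
            ((if 0 < p.2 + p.1 then ENNReal.ofReal ((p.2 + p.1 + 1) ^ (2*s)) else 0) *
              ENNReal.ofReal (‖Q p.2‖^2)) * ENNReal.ofReal ((p.1 + κ) ^ (-2 - 2*s))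
          apply Measurable.mul
          apply Measurable.mul
          · exact Measurable.ite (measurableSet_lt measurable_const (by fun_prop))
              (by fun_prop) measurable_const
          · fun_prop
          · fun_prop
      _ = ∫⁻ ζ, ENNReal.ofReal (‖Q ζ‖^2) *
            ∫⁻ η in Ioi (0:ℝ), (if 0 < ζ + η then ENNReal.ofReal ((ζ + η + 1) ^ (2*s)) else 0) *
              ENNReal.ofReal ((η + κ) ^ (-2 - 2*s)) := by
          apply lintegral_congr; intro ζ
          rw [← lintegral_const_mul' _ _ ENNReal.ofReal_ne_top]
          apply lintegral_congr; intro η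
          ring
  have h5 : T ≤ ENNReal.ofReal ((3 / (2*s + 1)) * κ ^ (-(2*s+1))) * NQ := by
    rw [h4]
    calc (∫⁻ ζ, ENNReal.ofReal (‖Q ζ‖^2) *
            ∫⁻ η in Ioi (0:ℝ), (if 0 < ζ + η then ENNReal.ofReal ((ζ + η + 1) ^ (2*s)) else 0) *
              ENNReal.ofReal ((η + κ) ^ (-2 - 2*s)))
        ≤ ∫⁻ ζ, ENNReal.ofReal (‖Q ζ‖^2) *
            ENNReal.ofReal ((3 / (2*s + 1)) * κ ^ (-(2*s+1)) * (|ζ| + 1) ^ (2*s)) := by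
          apply lintegral_mono
          intro ζ
          exact mul_le_mul_right (keyK hp hp0 hκ ζ) _
      _ = ENNReal.ofReal ((3 / (2*s + 1)) * κ ^ (-(2*s+1))) * NQ := by
          rw [hNQdef, ← lintegral_const_mul' _ _ ENNReal.ofReal_ne_top]
          apply lintegral_congr
          intro ζ
          rw [← ENNReal.ofReal_mul (by positivity : (0:ℝ) ≤ ‖Q ζ‖^2),
            ← ENNReal.ofReal_mul (by positivity : (0:ℝ) ≤ (3 / (2*s + 1)) * κ ^ (-(2*s+1)))]
          congr 1
          ring
  -- assemble
  calc (∫⁻ ξ in Ioi (0 : ℝ),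
        ENNReal.ofReal ((ξ + 1) ^ (2 * s) *
          ‖∫ η in Ioi (0 : ℝ), Q (ξ - η) * F η / ((η + κ : ℝ) : ℂ)‖ ^ 2))
      ≤ T * B := h1.trans h2.le
    _ ≤ (ENNReal.ofReal ((3 / (2*s + 1)) * κ ^ (-(2*s+1))) * NQ) * B := mul_le_mul_left h5 _
    _ = ENNReal.ofReal ((3 / (2*s + 1)) * κ ^ (-(4 * ((1/2 + s) / 2)))) * NQ * B := by
        rw [show (-(4 * ((1/2 + s) / 2)) : ℝ) = -(2*s+1) by ring]
end

section
/- For every κ > 0 and every measurable function Q : ℝ → ℂ, one has the identity ∫_0^∞ ∫_0^∞ |Q(ξ-η)|² / ((η+κ)(ξ+κ)) dη dξ = ∫_ℝ (log(1 + |ξ|/κ)/|ξ|) |Q(ξ)|² dξ (with the integrand on the right interpreted as |Q(0)|²/κ at ξ = 0), where both sides may be infinite simultaneously. Moreover, for every s ∈ (−1/2, 0) there is a constant C > 0 such that, with ε = (1/2+s)/2, the common value is at most C κ^{-4ε} ∫_ℝ (|ξ|+κ)^{2s} |Q(ξ)|² dξ for all κ ≥ 1. (This computes the Hilbert–Schmidt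 norm of R₀(κ)^{1/2} C₊ q R₀(κ)^{1/2} on the Hardy space when Q = q̂.) -/
open MeasureTheory Set Filter Real
open scoped ENNReal


/-- Real-integral computation of the inner integral. -/
lemma inner_real (κ t : ℝ) (hκ : 0 < κ) (ht : t ≠ 0) :
    ∫ η in Ioi (max 0 (-t)), (η + κ)⁻¹ * (η + t + κ)⁻¹
      = Real.log (1 + |t| / κ) / |t| ∧
    IntegrableOn (fun η => (η + κ)⁻¹ * (η + t + κ)⁻¹) (Ioi (max 0 (-t))) := by
  set a := max 0 (-t) with ha
  have ha0 : 0 ≤ a := le_max_left _ _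
  have hat : -t ≤ a := le_max_right _ _
  have h1 : ∀ x ∈ Ici a, 0 < x + κ := fun x hx => by
    have : a ≤ x := hx
    linarith
  have h2 : ∀ x ∈ Ici a, 0 < x + t + κ := fun x hx => by
    have : a ≤ x := hx
    have : -t ≤ x := le_trans hat this
    linarith
  set g : ℝ → ℝ := fun η => t⁻¹ * (Real.log (η + κ) - Real.log (η + t + κ)) with hg
  have hderiv : ∀ x ∈ Ici a, HasDerivAt g ((x + κ)⁻¹ * (x + t + κ)⁻¹) x := by
    intro x hx
    have d1 : HasDerivAt (fun y : ℝ => Real.log (y + κ)) ((x + κ)⁻¹) x := by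
      simpa [Function.comp_def] using (Real.hasDerivAt_log (h1 x hx).ne').comp x
        ((hasDerivAt_id x).add_const κ)
    have d2 : HasDerivAt (fun y : ℝ => Real.log (y + t + κ)) ((x + t + κ)⁻¹) x := by
      simpa [Function.comp_def] using (Real.hasDerivAt_log (h2 x hx).ne').comp x
        (((hasDerivAt_id x).add_const t).add_const κ)
    have := ((d1.sub d2).const_mul t⁻¹)
    refine this.congr_deriv ?_
    have hx1 := (h1 x hx).ne'
    have hx2 := (h2 x hx).ne'
    rw [inv_sub_inv hx1 hx2]
    field_simp
    try ring
  have hpos : ∀ x ∈ Ioi a, 0 ≤ (x + κ)⁻¹ * (x + t + κ)⁻¹ := fun x hx =>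
    mul_nonneg (inv_nonneg.2 (h1 x (Ioi_subset_Ici_self hx)).le) (inv_nonneg.2 (h2 x (Ioi_subset_Ici_self hx)).le)
  have htend : Tendsto g atTop (nhds 0) := by
    have h3 : Tendsto (fun x : ℝ => (x + κ) / (x + t + κ)) atTop (nhds 1) := by
      have : (fun x : ℝ => (x + κ) / (x + t + κ)) =ᶠ[atTop] fun x => 1 - t / (x + t + κ) := by
        filter_upwards [eventually_gt_atTop (a)] with x hx
        have := (h2 x (le_of_lt hx)).ne'
        field_simp
        try ring
      rw [tendsto_congr' this]
      have : Tendsto (fun x : ℝ => t / (x + t + κ)) atTop (nhds 0) :=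
        Tendsto.div_atTop tendsto_const_nhds
          (tendsto_atTop_add_const_right _ _ (tendsto_atTop_add_const_right _ _ tendsto_id))
      simpa using (tendsto_const_nhds (x := (1:ℝ))).sub this
    have h4 : Tendsto (fun x : ℝ => Real.log ((x + κ) / (x + t + κ))) atTop (nhds 0) := by
      have := (Real.continuousAt_log (one_ne_zero)).tendsto.comp h3
      simpa [Function.comp_def] using this
    have h5 : (fun x : ℝ => Real.log ((x + κ) / (x + t + κ))) =ᶠ[atTop]
        fun x => Real.log (x + κ) - Real.log (x + t + κ) := by
      filter_upwards [eventually_ge_atTop a] with x hx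
      exact Real.log_div (h1 x hx).ne' (h2 x hx).ne'
    rw [tendsto_congr' h5] at h4
    have := h4.const_mul t⁻¹
    simpa using this
  have hcont : ContinuousWithinAt g (Ici a) a :=
    (hderiv a self_mem_Ici).continuousAt.continuousWithinAt
  have hint := integral_Ioi_of_hasDerivAt_of_nonneg hcont
    (fun x hx => hderiv x (Ioi_subset_Ici_self hx)) hpos htend
  have hintg := integrableOn_Ioi_deriv_of_nonneg hcont
    (fun x hx => hderiv x (Ioi_subset_Ici_self hx)) hpos htend
  refine ⟨?_, hintg⟩
  rw [hint]
  have hgaval : g a = t⁻¹ * (Real.log (a + κ) - Real.log (a + t + κ)) := rfl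
  have hga : g a = - (Real.log (1 + |t| / κ) / |t|) := by
    rcases ht.lt_or_gt with htneg | htpos
    · have haeq : a = -t := by
        rw [ha, max_eq_right]; linarith
      have habs : |t| = -t := abs_of_neg htneg
      have hκt : (0:ℝ) < κ - t := by linarith
      have h7 : (1 + |t| / κ) = (κ - t) / κ := by rw [habs]; field_simp; ring
      have e1 : a + κ = κ - t := by rw [haeq]; ring
      have e2 : a + t + κ = κ := by rw [haeq]; ring
      rw [hgaval, e1, e2, h7, habs, Real.log_div hκt.ne' hκ.ne']
      ring
    · have haeq : a = 0 := by
        rw [ha, max_eq_left]; linarith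
      have habs : |t| = t := abs_of_pos htpos
      have hκt : (0:ℝ) < κ + t := by linarith
      have h7 : (1 + |t| / κ) = (κ + t) / κ := by rw [habs]; field_simp
      have e1 : a + κ = κ := by rw [haeq]; ring
      have e2 : a + t + κ = κ + t := by rw [haeq]; ring
      rw [hgaval, e1, e2, h7, habs, Real.log_div hκt.ne' hκ.ne']
      ring
  rw [hga]; ring


lemma logu (s : ℝ) (hs1 : -(1/2:ℝ) < s) (hs2 : s < 0) (u : ℝ) (hu : 0 < u) :
    Real.log (1 + u) ≤ (2 ^ (-(2*s)) + 2 / (1 + 2*s)) * (u * (1 + u) ^ (2*s)) := by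
  have hδ : (0:ℝ) < 1 + 2*s := by linarith
  have h1u : (0:ℝ) < 1 + u := by linarith
  have hC1 : (0:ℝ) < 2 ^ (-(2*s)) := Real.rpow_pos_of_pos two_pos _
  have hrp : (0:ℝ) < (1 + u) ^ (2*s) := Real.rpow_pos_of_pos h1u _
  have hprod : (0:ℝ) ≤ u * (1 + u) ^ (2*s) := mul_nonneg hu.le hrp.le
  rcases le_or_gt u 1 with hle | hgt
  · have hlog : Real.log (1 + u) ≤ u := by
      have := Real.log_le_sub_one_of_pos h1u; linarith
    have key : (1:ℝ) ≤ 2 ^ (-(2*s)) * (1 + u) ^ (2*s) := by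
      have e : 2 ^ (-(2*s)) * (1 + u) ^ (2*s) = ((1 + u)/2) ^ (2*s) := by
        rw [Real.div_rpow h1u.le two_pos.le, Real.rpow_neg two_pos.le,
          div_eq_mul_inv, mul_comm]
      rw [e]
      exact Real.one_le_rpow_of_pos_of_le_one_of_nonpos (by positivity)
        (by linarith) (by linarith)
    calc Real.log (1 + u) ≤ u := hlog
      _ = u * 1 := (mul_one u).symm
      _ ≤ u * (2 ^ (-(2*s)) * (1 + u) ^ (2*s)) := by
          exact mul_le_mul_of_nonneg_left key hu.le
      _ = 2 ^ (-(2*s)) * (u * (1 + u) ^ (2*s)) := by ring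
      _ ≤ (2 ^ (-(2*s)) + 2 / (1 + 2*s)) * (u * (1 + u) ^ (2*s)) := by
          apply mul_le_mul_of_nonneg_right _ hprod
          have : (0:ℝ) ≤ 2 / (1 + 2*s) := by positivity
          linarith
  · have hrep : (0:ℝ) < (1 + u) ^ (1 + 2*s) := Real.rpow_pos_of_pos h1u _
    have hlog : Real.log (1 + u) ≤ (1 + u) ^ (1 + 2*s) / (1 + 2*s) := by
      have h := Real.log_rpow h1u (1 + 2*s)
      have h2 := Real.log_le_sub_one_of_pos hrep
      rw [h] at h2
      rw [div_eq_inv_mul, le_inv_mul_iff₀ hδ]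
      nlinarith
    have hsplit : (1 + u) ^ (1 + 2*s) = (1 + u) * (1 + u) ^ (2*s) := by
      rw [Real.rpow_add h1u, Real.rpow_one]
    have h2u : 1 + u ≤ 2 * u := by linarith
    calc Real.log (1 + u) ≤ (1 + u) ^ (1 + 2*s) / (1 + 2*s) := hlog
      _ = ((1 + u) * (1 + u) ^ (2*s)) / (1 + 2*s) := by rw [hsplit]
      _ ≤ ((2*u) * (1 + u) ^ (2*s)) / (1 + 2*s) := by
          gcongr
      _ = (2 / (1 + 2*s)) * (u * (1 + u) ^ (2*s)) := by ring
      _ ≤ (2 ^ (-(2*s)) + 2 / (1 + 2*s)) * (u * (1 + u) ^ (2*s)) := by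
          apply mul_le_mul_of_nonneg_right _ hprod
          linarith

lemma scalar (s : ℝ) (hs1 : -(1/2:ℝ) < s) (hs2 : s < 0) (κ : ℝ) (hκ : 1 ≤ κ) (t : ℝ) :
    Real.log (1 + |t| / κ) / |t| ≤
      (2 ^ (-(2*s)) + 2 / (1 + 2*s)) * κ ^ (-(1 + 2*s)) * (|t| + κ) ^ (2*s) := by
  have hκ0 : (0:ℝ) < κ := lt_of_lt_of_le one_pos hκ
  have hδ : (0:ℝ) < 1 + 2*s := by linarith
  have hCpos : (0:ℝ) < 2 ^ (-(2*s)) + 2 / (1 + 2*s) := by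
    have h1 : (0:ℝ) < 2 ^ (-(2*s)) := Real.rpow_pos_of_pos two_pos _
    have h2 : (0:ℝ) < 2 / (1 + 2*s) := by positivity
    linarith
  set C := 2 ^ (-(2*s)) + 2 / (1 + 2*s) with hC
  rcases eq_or_ne t 0 with rfl | ht
  · simp only [abs_zero, zero_div, add_zero, div_zero]
    have : (0:ℝ) < (0 + κ) ^ (2*s) := Real.rpow_pos_of_pos (by linarith) _
    have : (0:ℝ) < κ ^ (-(1 + 2*s)) := Real.rpow_pos_of_pos hκ0 _
    have hCnn : 0 < C := hCpos
    positivity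
  · have habs : (0:ℝ) < |t| := abs_pos.2 ht
    set u := |t| / κ with hu
    have hu0 : (0:ℝ) < u := by positivity
    have h1u : (0:ℝ) < 1 + u := by linarith
    have hterm : |t| = u * κ := by rw [hu]; field_simp
    have hkey := logu s hs1 hs2 u hu0
    have hrhs : C * κ ^ (-(1 + 2*s)) * (|t| + κ) ^ (2*s)
        = C * (1 + u) ^ (2*s) / κ := by
      have e1 : |t| + κ = κ * (1 + u) := by rw [hu]; field_simp; ring
      rw [e1, Real.mul_rpow hκ0.le h1u.le]
      have e2 : κ ^ (-(1 + 2*s)) * κ ^ (2*s) = κ⁻¹ := by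
        rw [← Real.rpow_add hκ0]
        norm_num
        exact Real.rpow_neg_one κ
      calc C * κ ^ (-(1 + 2*s)) * (κ ^ (2*s) * (1 + u) ^ (2*s))
          = C * (κ ^ (-(1 + 2*s)) * κ ^ (2*s)) * (1 + u) ^ (2*s) := by ring
        _ = C * κ⁻¹ * (1 + u) ^ (2*s) := by rw [e2]
        _ = C * (1 + u) ^ (2*s) / κ := by ring
    rw [hrhs, hterm]
    rw [div_le_div_iff₀ (by positivity) hκ0]
    have hrp : (0:ℝ) < (1 + u) ^ (2*s) := Real.rpow_pos_of_pos h1u _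
    calc Real.log (1 + u) * κ ≤ (C * (u * (1 + u) ^ (2*s))) * κ := by
          exact mul_le_mul_of_nonneg_right hkey hκ0.le
      _ = C * (1 + u) ^ (2*s) * (u * κ) := by ring


noncomputable def Fq (Q : ℝ → ℂ) (t : ℝ) : ℝ≥0∞ := ENNReal.ofReal (‖Q t‖ ^ 2)
noncomputable def cc (κ x : ℝ) : ℝ≥0∞ := ENNReal.ofReal ((x + κ)⁻¹)

lemma inner_lint (κ t : ℝ) (hκ : 0 < κ) (ht : t ≠ 0) :
    ∫⁻ η in Ioi (max 0 (-t)), ENNReal.ofReal ((η + κ)⁻¹ * (η + t + κ)⁻¹)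
      = ENNReal.ofReal (Real.log (1 + |t| / κ) / |t|) := by
  obtain ⟨heq, hint⟩ := inner_real κ t hκ ht
  rw [← heq]
  refine (MeasureTheory.ofReal_integral_eq_lintegral_ofReal hint ?_).symm
  refine (ae_restrict_iff' measurableSet_Ioi).2 (ae_of_all _ fun x hx => ?_)
  have hx' : max 0 (-t) < x := hx
  have hm1 : (0:ℝ) ≤ max 0 (-t) := le_max_left _ _
  have hm2 : -t ≤ max 0 (-t) := le_max_right _ _
  have h1 : (0:ℝ) < x + κ := by linarith
  have h2 : (0:ℝ) < x + t + κ := by linarith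
  positivity


lemma main_eq (κ : ℝ) (hκ : 0 < κ) (Q : ℝ → ℂ) (hQ : Measurable Q) :
    (∫⁻ ξ in Ioi (0 : ℝ), ∫⁻ η in Ioi (0 : ℝ),
        ENNReal.ofReal (‖Q (ξ - η)‖ ^ 2 / ((η + κ) * (ξ + κ))))
      = ∫⁻ ξ : ℝ, ENNReal.ofReal (Real.log (1 + |ξ| / κ) / |ξ| * ‖Q ξ‖ ^ 2) := by
  have hFm : Measurable (Fq Q) :=
    ((hQ.norm.pow_const 2)).ennreal_ofReal
  have hcm : Measurable (cc κ) :=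
    ((measurable_id.add_const κ).inv).ennreal_ofReal
  have hFt : ∀ t, Fq Q t ≠ ⊤ := fun t => ENNReal.ofReal_ne_top
  -- Step A
  have stepA : (∫⁻ ξ in Ioi (0 : ℝ), ∫⁻ η in Ioi (0 : ℝ),
        ENNReal.ofReal (‖Q (ξ - η)‖ ^ 2 / ((η + κ) * (ξ + κ))))
      = ∫⁻ ξ in Ioi (0 : ℝ), ∫⁻ η in Ioi (0 : ℝ), Fq Q (ξ - η) * (cc κ η * cc κ ξ) := by
    refine setLIntegral_congr_fun measurableSet_Ioi (fun ξ hξ => ?_)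
    refine setLIntegral_congr_fun measurableSet_Ioi (fun η hη => ?_)
    have hη0 : (0:ℝ) < η := hη
    have hξ0 : (0:ℝ) < ξ := hξ
    have h1 : (0:ℝ) < η + κ := by linarith
    have h2 : (0:ℝ) < ξ + κ := by linarith
    rw [div_eq_mul_inv, mul_inv,
      ENNReal.ofReal_mul (by positivity),
      ENNReal.ofReal_mul (by positivity)]
    rfl
  rw [stepA]
  -- Step B : swap
  have hswapmeas : Measurable (Function.uncurry fun ξ η : ℝ =>
      Fq Q (ξ - η) * (cc κ η * cc κ ξ)) := by
    apply Measurable.mul (f := fun p : ℝ × ℝ => Fq Q (p.1 - p.2)) (g := fun p => cc κ p.2 * cc κ p.1)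
    · exact hFm.comp (measurable_fst.sub measurable_snd)
    · exact (hcm.comp measurable_snd).mul (hcm.comp measurable_fst)
  rw [lintegral_lintegral_swap hswapmeas.aemeasurable]
  -- Step C : translate the inner integral
  have stepC : ∀ η : ℝ, (∫⁻ ξ in Ioi (0:ℝ), Fq Q (ξ - η) * (cc κ η * cc κ ξ))
      = ∫⁻ t in Ioi (-η), Fq Q t * (cc κ η * cc κ (t + η)) := by
    intro η
    have h := (measurePreserving_add_right volume η).setLIntegral_comp_preimage_emb
      ((Homeomorph.addRight η).isClosedEmbedding.measurableEmbedding)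
      (fun ξ => Fq Q (ξ - η) * (cc κ η * cc κ ξ)) (Ioi 0)
    rw [← h, preimage_add_const_Ioi, zero_sub]
    refine setLIntegral_congr_fun measurableSet_Ioi (fun t ht => ?_)
    simp only [Homeomorph.addRight, add_sub_cancel_right]
  calc (∫⁻ η in Ioi (0:ℝ), ∫⁻ ξ in Ioi (0:ℝ), Fq Q (ξ - η) * (cc κ η * cc κ ξ))
      = ∫⁻ η in Ioi (0:ℝ), ∫⁻ t in Ioi (-η), Fq Q t * (cc κ η * cc κ (t + η)) := by
        exact setLIntegral_congr_fun measurableSet_Ioi (fun η _ => stepC η)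
    _ = ∫⁻ η in Ioi (0:ℝ), ∫⁻ t : ℝ,
          (Ioi (-η)).indicator (fun t => Fq Q t * (cc κ η * cc κ (t + η))) t := by
        refine setLIntegral_congr_fun measurableSet_Ioi (fun η _ => ?_)
        rw [lintegral_indicator measurableSet_Ioi]
    _ = ∫⁻ t : ℝ, ∫⁻ η in Ioi (0:ℝ),
          (Ioi (-η)).indicator (fun t => Fq Q t * (cc κ η * cc κ (t + η))) t := by
        apply lintegral_lintegral_swap
        have : (Function.uncurry fun η t : ℝ =>
            (Ioi (-η)).indicator (fun t => Fq Q t * (cc κ η * cc κ (t + η))) t)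
            = {p : ℝ × ℝ | -p.1 < p.2}.indicator
                (fun p => Fq Q p.2 * (cc κ p.1 * cc κ (p.2 + p.1))) := by
          ext p
          by_cases h : -p.1 < p.2 <;>
            simp [Function.uncurry, Set.indicator_apply, mem_Ioi, h]
        rw [this]
        refine (Measurable.indicator ?_ ?_).aemeasurable
        · exact ((hFm.comp measurable_snd).mul
            ((hcm.comp measurable_fst).mul (hcm.comp (measurable_snd.add measurable_fst))))
        · exact measurableSet_lt measurable_fst.neg measurable_snd
    _ = ∫⁻ t : ℝ, Fq Q t * ∫⁻ η in Ioi (max 0 (-t)), cc κ η * cc κ (t + η) := by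
        refine lintegral_congr fun t => ?_
        have h1 : ∀ η : ℝ, (Ioi (-η)).indicator
              (fun t' => Fq Q t' * (cc κ η * cc κ (t' + η))) t
            = (Ioi (-t)).indicator (fun η => Fq Q t * (cc κ η * cc κ (t + η))) η := by
          intro η
          by_cases h : -η < t
          · have h' : -t < η := by linarith
            simp [Set.indicator_apply, mem_Ioi, h, h']
          · have h' : ¬ (-t < η) := by intro hc; exact h (by linarith)
            simp [Set.indicator_apply, mem_Ioi, h, h']
        rw [lintegral_congr fun η => h1 η]
        rw [lintegral_indicator measurableSet_Ioi,
          Measure.restrict_restrict measurableSet_Ioi, Ioi_inter_Ioi, max_comm]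
        rw [lintegral_const_mul' _ _ (hFt t)]
    _ = ∫⁻ t : ℝ, ENNReal.ofReal (Real.log (1 + |t| / κ) / |t| * ‖Q t‖ ^ 2) := by
        have h0 : ∀ᵐ t : ℝ, t ≠ (0:ℝ) := by
          refine ae_iff.2 ?_
          have : {a : ℝ | ¬ a ≠ 0} = {0} := by ext a; simp
          rw [this]
          exact measure_singleton 0
        refine lintegral_congr_ae ?_
        filter_upwards [h0] with t ht
        have hinner : (∫⁻ η in Ioi (max 0 (-t)), cc κ η * cc κ (t + η))
            = ENNReal.ofReal (Real.log (1 + |t| / κ) / |t|) := by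
          rw [← inner_lint κ t hκ ht]
          refine setLIntegral_congr_fun measurableSet_Ioi (fun η hη => ?_)
          have hη' : max 0 (-t) < η := hη
          have h1 : (0:ℝ) < η + κ := by
            have : (0:ℝ) ≤ max 0 (-t) := le_max_left _ _
            linarith
          rw [cc, cc, ← ENNReal.ofReal_mul (by positivity)]
          congr 1
          ring
        have hL : 0 ≤ Real.log (1 + |t| / κ) / |t| := by
          apply div_nonneg _ (abs_nonneg t)
          apply Real.log_nonneg
          have : 0 ≤ |t| / κ := by positivity
          linarith
        rw [hinner, Fq, ENNReal.ofReal_mul hL, mul_comm]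


open MeasureTheory Set in
/-- The Hilbert–Schmidt norm identity
`∫_0^∞∫_0^∞ |Q(ξ-η)|²/((η+κ)(ξ+κ)) dη dξ = ∫_ℝ (log(1+|ξ|/κ)/|ξ|) |Q(ξ)|² dξ`
(both sides possibly infinite), together with the bound by `C κ^{-4ε} ‖q‖²_{H^s_κ}`
for `s ∈ (-1/2,0)`, `ε = (1/2+s)/2`, `κ ≥ 1`. -/
theorem stmt4 (s : ℝ) (hs : s ∈ Set.Ioo (-(1/2) : ℝ) 0) :
    ∃ C : ℝ, 0 < C ∧
      ∀ Q : ℝ → ℂ, Measurable Q →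
        (∀ κ : ℝ, 0 < κ →
          (∫⁻ ξ in Ioi (0 : ℝ), ∫⁻ η in Ioi (0 : ℝ),
              ENNReal.ofReal (‖Q (ξ - η)‖ ^ 2 / ((η + κ) * (ξ + κ))))
            = ∫⁻ ξ : ℝ, ENNReal.ofReal (Real.log (1 + |ξ| / κ) / |ξ| * ‖Q ξ‖ ^ 2)) ∧
        (∀ κ : ℝ, 1 ≤ κ →
          (∫⁻ ξ in Ioi (0 : ℝ), ∫⁻ η in Ioi (0 : ℝ),
              ENNReal.ofReal (‖Q (ξ - η)‖ ^ 2 / ((η + κ) * (ξ + κ))))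
            ≤ ENNReal.ofReal (C * κ ^ (-(4 * ((1/2 + s) / 2)))) *
                ∫⁻ ξ : ℝ, ENNReal.ofReal ((|ξ| + κ) ^ (2 * s) * ‖Q ξ‖ ^ 2)) := by
  obtain ⟨hs1, hs2⟩ := hs
  have hδ : (0:ℝ) < 1 + 2*s := by linarith
  have hC1 : (0:ℝ) < 2 ^ (-(2*s)) := Real.rpow_pos_of_pos two_pos _
  have hC2 : (0:ℝ) < 2 / (1 + 2*s) := by positivity
  refine ⟨2 ^ (-(2*s)) + 2 / (1 + 2*s), by linarith, fun Q hQ => ⟨fun κ hκ => main_eq κ hκ Q hQ, ?_⟩⟩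
  intro κ hκ
  have hκ0 : (0:ℝ) < κ := lt_of_lt_of_le one_pos hκ
  rw [main_eq κ hκ0 Q hQ]
  have hexp : -(4 * ((1/2 + s) / 2)) = -(1 + 2*s) := by ring
  rw [hexp]
  rw [← lintegral_const_mul' (ENNReal.ofReal
    ((2 ^ (-(2*s)) + 2 / (1 + 2*s)) * κ ^ (-(1 + 2*s)))) _ ENNReal.ofReal_ne_top]
  refine lintegral_mono fun t => ?_
  have hκr : (0:ℝ) < κ ^ (-(1 + 2*s)) := Real.rpow_pos_of_pos hκ0 _
  have hCκ : (0:ℝ) ≤ (2 ^ (-(2*s)) + 2 / (1 + 2*s)) * κ ^ (-(1 + 2*s)) := by positivity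
  rw [← ENNReal.ofReal_mul hCκ]
  apply ENNReal.ofReal_le_ofReal
  have hsc := scalar s hs1 hs2 κ hκ t
  have ha : (0:ℝ) ≤ ‖Q t‖ ^ 2 := by positivity
  calc Real.log (1 + |t| / κ) / |t| * ‖Q t‖ ^ 2
      ≤ ((2 ^ (-(2*s)) + 2 / (1 + 2*s)) * κ ^ (-(1 + 2*s)) * (|t| + κ) ^ (2*s)) * ‖Q t‖ ^ 2 :=
        mul_le_mul_of_nonneg_right hsc ha
    _ = (2 ^ (-(2*s)) + 2 / (1 + 2*s)) * κ ^ (-(1 + 2*s)) * ((|t| + κ) ^ (2*s) * ‖Q t‖ ^ 2) := by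
        ring
end

section
/- Let q be a real-valued Schwartz function on ℝ, let ϰ > 0, and let n be a Schwartz function on ℝ whose Fourier transform is supported in [0,∞) and which solves the gauge equation n' = −iϰ n + i C₊(q(n+1)). Then ∫_ℝ ( |n|² + n + conj(n) )(x) · q'(x) dx = 0. (This expresses the Poisson commutativity { β(ϰ), P } = 0 of β with the momentum P(q) = ∫ q²/2.) -/
open MeasureTheory Set ComplexConjugate

/-- Fourier transform with the convention `f̂(ξ) = (2π)^{-1/2} ∫ e^{-iξx} f(x) dx`. -/
noncomputable def FT (f : ℝ → ℂ) (ξ : ℝ) : ℂ :=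
  (Real.sqrt (2 * Real.pi))⁻¹ * ∫ x : ℝ, Complex.exp (-(Complex.I * ξ * x)) * f x

/-- Cauchy–Szegő projection `C₊`, the Fourier multiplier with symbol `1_{[0,∞)}`. -/
noncomputable def Cplus (f : ℝ → ℂ) (x : ℝ) : ℂ :=
  (Real.sqrt (2 * Real.pi))⁻¹ * ∫ ξ in Ici (0 : ℝ), Complex.exp (Complex.I * ξ * x) * FT f ξ

/-- The gauge equation `n' = -iϰ n + i C₊(q(n+1))`. -/
def SolvesGauge (q : ℝ → ℂ) (κ : ℝ) (m : ℝ → ℂ) : Prop :=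
  ∀ x : ℝ, deriv m x = -Complex.I * κ * m x + Complex.I * Cplus (fun y => q y * (m y + 1)) x

noncomputable section Aux

open SchwartzMap Complex Real FourierTransform Filter

/-- Conjugation of a Schwartz map. -/
def conjS (f : SchwartzMap ℝ ℂ) : SchwartzMap ℝ ℂ where
  toFun := fun x => conj (f x)
  smooth' := Complex.conjCLE.contDiff.comp (f.smooth ⊤)
  decay' := by
    intro k n
    obtain ⟨C, hC⟩ := f.decay' k n
    refine ⟨C, fun x => ?_⟩
    have : (fun x => conj (f x)) = ⇑Complex.conjLIE ∘ ⇑f := rfl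
    rw [this, LinearIsometryEquiv.norm_iteratedFDeriv_comp_left]
    exact hC x

@[simp] lemma conjS_apply (f : SchwartzMap ℝ ℂ) (x : ℝ) : conjS f x = conj (f x) := rfl

lemma schwartz_hasTemperateGrowth (f : SchwartzMap ℝ ℂ) : Function.HasTemperateGrowth ⇑f := by
  refine ⟨f.smooth ⊤, fun n => ⟨0, SchwartzMap.seminorm ℝ 0 n f, fun x => ?_⟩⟩
  simpa using f.norm_iteratedFDeriv_le_seminorm ℝ n x

/-- Product of Schwartz maps. -/
def mulS (f g : SchwartzMap ℝ ℂ) : SchwartzMap ℝ ℂ :=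
  SchwartzMap.bilinLeftCLM (ContinuousLinearMap.mul ℝ ℂ) (schwartz_hasTemperateGrowth g) f

@[simp] lemma mulS_apply (f g : SchwartzMap ℝ ℂ) (x : ℝ) : mulS f g x = f x * g x := rfl

lemma schwartz_tendsto_atTop (f : SchwartzMap ℝ ℂ) : Tendsto ⇑f atTop (nhds 0) := by
  have h := f.toZeroAtInfty.zero_at_infty'
  exact h.mono_left (by rw [cocompact_eq_atBot_atTop]; exact le_sup_right)

lemma schwartz_tendsto_atBot (f : SchwartzMap ℝ ℂ) : Tendsto ⇑f atBot (nhds 0) := by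
  have h := f.toZeroAtInfty.zero_at_infty'
  exact h.mono_left (by rw [cocompact_eq_atBot_atTop]; exact le_sup_left)

lemma integral_deriv_schwartz (f : SchwartzMap ℝ ℂ) : ∫ x : ℝ, deriv (⇑f) x = 0 := by
  have hint : Integrable (fun x => deriv (⇑f) x) := (SchwartzMap.derivCLM ℝ ℂ f).integrable
  have h1 : Tendsto (fun T : ℝ => ∫ x in (-T)..T, deriv (⇑f) x) atTop
      (nhds (∫ x : ℝ, deriv (⇑f) x)) :=
    intervalIntegral_tendsto_integral hint tendsto_neg_atTop_atBot tendsto_id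
  have h2 : ∀ T : ℝ, (∫ x in (-T)..T, deriv (⇑f) x) = f T - f (-T) := by
    intro T
    exact intervalIntegral.integral_deriv_eq_sub
      (fun x _ => f.differentiableAt) hint.intervalIntegrable
  have h3 : Tendsto (fun T : ℝ => f T - f (-T)) atTop (nhds 0) := by
    simpa using (schwartz_tendsto_atTop f).sub
      ((schwartz_tendsto_atBot f).comp tendsto_neg_atTop_atBot)
  exact tendsto_nhds_unique (h1.congr (fun T => h2 T)) h3

local notation "c" => (((Real.sqrt (2 * Real.pi))⁻¹ : ℝ) : ℂ)

lemma sqrt2pi_pos : 0 < Real.sqrt (2 * Real.pi) := Real.sqrt_pos.mpr (by positivity)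

lemma c_ne_zero : c ≠ 0 := by
  simp only [ne_eq, ofReal_eq_zero, inv_eq_zero]
  exact sqrt2pi_pos.ne'

lemma FT_def (f : ℝ → ℂ) (ξ : ℝ) :
    FT f ξ = c * ∫ x : ℝ, Complex.exp (-(Complex.I * ξ * x)) * f x := by
  rw [FT]

lemma Cplus_def (f : ℝ → ℂ) (x : ℝ) :
    Cplus f x = c * ∫ ξ in Ici (0 : ℝ), Complex.exp (Complex.I * ξ * x) * FT f ξ := by
  rw [Cplus]

lemma FT_eq (f : ℝ → ℂ) (ξ : ℝ) :
    FT f ξ = c * 𝓕 f (ξ / (2 * Real.pi)) := by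
  rw [FT_def, Real.fourier_eq' (V := ℝ) (E := ℂ)]
  congr 1
  refine integral_congr_ae (Filter.Eventually.of_forall fun x => ?_)
  simp only [smul_eq_mul]
  congr 1
  rw [RCLike.inner_apply, starRingEnd_apply, star_trivial]
  have hπ : (Real.pi) ≠ 0 := Real.pi_ne_zero
  have hr : (-2 * Real.pi * (ξ / (2 * Real.pi) * x) : ℝ) = -(ξ * x) := by field_simp
  rw [hr]
  push_cast
  ring

lemma FT_integrable (f : SchwartzMap ℝ ℂ) : Integrable (FT ⇑f) := by
  have h : Integrable (⇑(FourierTransform.fourierCLE ℂ _ f)) :=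
    (FourierTransform.fourierCLE ℂ _ f).integrable
  rw [FourierTransform.fourierCLE_apply, SchwartzMap.fourier_coe] at h
  have h2 : Integrable (fun ξ : ℝ => 𝓕 ⇑f (ξ / (2 * Real.pi))) :=
    h.comp_div (by positivity)
  have := h2.const_mul c
  refine this.congr (Filter.Eventually.of_forall fun ξ => ?_)
  rw [FT_eq]

lemma FT_continuous (f : SchwartzMap ℝ ℂ) : Continuous (FT ⇑f) := by
  have h : Continuous (𝓕 ⇑f) := by
    rw [← SchwartzMap.fourier_coe, ← FourierTransform.fourierCLE_apply (R := ℂ)]; exact (FourierTransform.fourierCLE ℂ _ f).continuous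
  have : Continuous fun ξ : ℝ => c * 𝓕 ⇑f (ξ / (2 * Real.pi)) :=
    continuous_const.mul (h.comp (continuous_id.div_const _))
  exact this.congr fun ξ => (FT_eq _ _).symm

lemma conj_FT (g : ℝ → ℂ) (ξ : ℝ) :
    conj (FT g ξ) = c * ∫ x : ℝ, Complex.exp (Complex.I * ξ * x) * conj (g x) := by
  rw [FT_def, map_mul, ← integral_conj]
  congr 1
  · exact conj_ofReal _
  · refine integral_congr_ae (Filter.Eventually.of_forall fun x => ?_)
    show conj (Complex.exp (-(Complex.I * ξ * x)) * g x) = _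
    rw [map_mul, ← Complex.exp_conj]
    congr 2
    simp [Complex.conj_I]

lemma FT_inversion (f : SchwartzMap ℝ ℂ) (x : ℝ) :
    c * ∫ ξ : ℝ, Complex.exp (Complex.I * ξ * x) * FT ⇑f ξ = f x := by
  have h𝓕int : Integrable (𝓕 ⇑f) := by
    have h : Integrable (⇑(FourierTransform.fourierCLE ℂ _ f)) :=
      (FourierTransform.fourierCLE ℂ _ f).integrable
    rwa [FourierTransform.fourierCLE_apply, SchwartzMap.fourier_coe] at h
  have hπ : (Real.pi) ≠ 0 := Real.pi_ne_zero
  set g : ℝ → ℂ := fun w => Complex.exp ((2 * Real.pi * (w * x) : ℝ) * Complex.I) * 𝓕 ⇑f w with hg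
  have key : ∀ ξ : ℝ, Complex.exp (Complex.I * ξ * x) * FT ⇑f ξ = c * g (ξ / (2 * Real.pi)) := by
    intro ξ
    rw [FT_eq]
    have hgv : g (ξ / (2 * Real.pi)) =
        Complex.exp ((ξ * x : ℝ) * Complex.I) * 𝓕 ⇑f (ξ / (2 * Real.pi)) := by
      simp only [hg]
      have : (2 * Real.pi * (ξ / (2 * Real.pi) * x) : ℝ) = ξ * x := by field_simp
      rw [this]
    rw [hgv]
    have : Complex.exp (Complex.I * ξ * x) = Complex.exp ((ξ * x : ℝ) * Complex.I) := by
      congr 1; push_cast; ring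
    rw [this]; ring
  rw [integral_congr_ae (Filter.Eventually.of_forall key), integral_const_mul,
    MeasureTheory.Measure.integral_comp_div g (2 * Real.pi)]
  have hinv : ∫ w : ℝ, g w = f x := by
    have h2 := congrFun (Continuous.fourierInv_fourier_eq f.continuous f.integrable h𝓕int) x
    rw [Real.fourierInv_eq' (V := ℝ) (E := ℂ)] at h2
    rw [← h2]
    refine integral_congr_ae (Filter.Eventually.of_forall fun w => ?_)
    simp [hg, smul_eq_mul, RCLike.inner_apply, starRingEnd_apply]
    left; ring_nf
  rw [hinv]
  have habs : |2 * Real.pi| = 2 * Real.pi := abs_of_pos (by positivity)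
  rw [habs]
  have hone : ((c * c * (((2 * Real.pi : ℝ)) : ℂ)) : ℂ) = 1 := by
    rw [← ofReal_mul, ← ofReal_mul]
    have h1 : Real.sqrt (2 * Real.pi) * Real.sqrt (2 * Real.pi) = 2 * Real.pi :=
      Real.mul_self_sqrt (by positivity)
    have ha : Real.sqrt (2 * Real.pi) ≠ 0 := sqrt2pi_pos.ne'
    have : ((Real.sqrt (2 * Real.pi))⁻¹ * (Real.sqrt (2 * Real.pi))⁻¹ * (2 * Real.pi) : ℝ) = 1 := by
      rw [← mul_inv, h1]; exact inv_mul_cancel₀ (by positivity)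
    rw [this, ofReal_one]
  calc c * (c * ((2 * Real.pi : ℝ) • f x)) = (c * c * ((2 * Real.pi : ℝ) : ℂ)) * f x := by
        rw [Complex.real_smul]; ring
    _ = f x := by rw [hone, one_mul]

lemma norm_exp_I_mul (ξ x : ℝ) : ‖Complex.exp (Complex.I * ξ * x)‖ = 1 := by
  rw [Complex.norm_exp]
  have : (Complex.I * ξ * x).re = 0 := by simp
  rw [this, Real.exp_zero]

lemma swap_lemma (φ ψ : ℝ → ℂ) (hφi : Integrable φ) (hψi : Integrable ψ)
    (hφc : Continuous φ) (hψc : Continuous ψ) (s : Set ℝ) :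
    ∫ x : ℝ, ∫ ξ in s, Complex.exp (Complex.I * ξ * x) * (φ ξ * ψ x)
      = ∫ ξ in s, ∫ x : ℝ, Complex.exp (Complex.I * ξ * x) * (φ ξ * ψ x) := by
  apply integral_integral_swap
  have hmeas : AEStronglyMeasurable
      (fun p : ℝ × ℝ => Complex.exp (Complex.I * p.2 * p.1) * (φ p.2 * ψ p.1))
      (volume.prod (volume.restrict s)) := by
    apply Continuous.aestronglyMeasurable
    have h1 : Continuous fun p : ℝ × ℝ => Complex.I * (p.2 : ℂ) * (p.1 : ℂ) := by
      continuity
    exact (Complex.continuous_exp.comp h1).mul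
      ((hφc.comp continuous_snd).mul (hψc.comp continuous_fst))
  have hbound : Integrable (fun p : ℝ × ℝ => ‖ψ p.1‖ * ‖φ p.2‖)
      (volume.prod (volume.restrict s)) :=
    hψi.norm.mul_prod hφi.norm.restrict
  refine hbound.mono' hmeas (Filter.Eventually.of_forall fun p => ?_)
  rw [Function.uncurry]
  simp only [norm_mul, norm_exp_I_mul, one_mul, norm_norm]
  rw [mul_comm ‖φ p.2‖]

lemma Cplus_pairing (f g : SchwartzMap ℝ ℂ) :
    ∫ x : ℝ, Cplus ⇑f x * conj (g x) = ∫ ξ in Ici (0:ℝ), FT ⇑f ξ * conj (FT ⇑g ξ) := by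
  have key : ∀ x : ℝ, Cplus ⇑f x * conj (g x)
      = c * ∫ ξ in Ici (0:ℝ), Complex.exp (Complex.I * ξ * x) * (FT ⇑f ξ * conj (g x)) := by
    intro x
    rw [Cplus_def, mul_assoc, ← integral_mul_const]
    congr 1
    refine integral_congr_ae (Filter.Eventually.of_forall fun ξ => ?_)
    show (Complex.exp (Complex.I * ξ * x) * FT ⇑f ξ) * conj (g x) = _
    ring
  rw [integral_congr_ae (Filter.Eventually.of_forall key), integral_const_mul]
  rw [swap_lemma (FT ⇑f) (fun x => conj (g x)) (FT_integrable f) ((conjS g).integrable)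
    (FT_continuous f) ((conjS g).continuous) (Ici 0)]
  have inner : ∀ ξ : ℝ, (∫ x : ℝ, Complex.exp (Complex.I * ξ * x) * (FT ⇑f ξ * conj (g x)))
      = c⁻¹ * (FT ⇑f ξ * conj (FT ⇑g ξ)) := by
    intro ξ
    have h1 : ∀ x : ℝ, Complex.exp (Complex.I * ξ * x) * (FT ⇑f ξ * conj (g x))
        = FT ⇑f ξ * (Complex.exp (Complex.I * ξ * x) * conj (g x)) := fun x => by ring
    rw [integral_congr_ae (Filter.Eventually.of_forall h1), integral_const_mul]
    have h3 : (∫ x : ℝ, Complex.exp (Complex.I * ξ * x) * conj (g x))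
        = c⁻¹ * conj (FT ⇑g ξ) := by
      rw [conj_FT ⇑g ξ, ← mul_assoc, inv_mul_cancel₀ c_ne_zero, one_mul]
    rw [h3]; ring
  rw [integral_congr_ae (Filter.Eventually.of_forall inner), integral_const_mul, ← mul_assoc,
    mul_inv_cancel₀ c_ne_zero, one_mul]

lemma Parseval (f g : SchwartzMap ℝ ℂ) :
    ∫ ξ : ℝ, FT ⇑f ξ * conj (FT ⇑g ξ) = ∫ x : ℝ, f x * conj (g x) := by
  have key : ∀ ξ : ℝ, FT ⇑f ξ * conj (FT ⇑g ξ)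
      = c * ∫ x : ℝ, Complex.exp (Complex.I * ξ * x) * (FT ⇑f ξ * conj (g x)) := by
    intro ξ
    rw [conj_FT ⇑g ξ]
    rw [show FT ⇑f ξ * (c * ∫ x : ℝ, Complex.exp (Complex.I * ξ * x) * conj (g x))
        = c * (FT ⇑f ξ * ∫ x : ℝ, Complex.exp (Complex.I * ξ * x) * conj (g x)) from by ring,
      ← integral_const_mul]
    congr 1
    refine integral_congr_ae (Filter.Eventually.of_forall fun x => ?_)
    show FT ⇑f ξ * (Complex.exp (Complex.I * ξ * x) * conj (g x)) = _
    ring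
  rw [integral_congr_ae (Filter.Eventually.of_forall key), integral_const_mul]
  have hswap := swap_lemma (FT ⇑f) (fun x => conj (g x)) (FT_integrable f) ((conjS g).integrable)
    (FT_continuous f) ((conjS g).continuous) univ
  rw [Measure.restrict_univ] at hswap
  rw [← hswap]
  have inner : ∀ x : ℝ, (∫ ξ : ℝ, Complex.exp (Complex.I * ξ * x) * (FT ⇑f ξ * conj (g x)))
      = c⁻¹ * (f x * conj (g x)) := by
    intro x
    have h1 : ∀ ξ : ℝ, Complex.exp (Complex.I * ξ * x) * (FT ⇑f ξ * conj (g x))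
        = conj (g x) * (Complex.exp (Complex.I * ξ * x) * FT ⇑f ξ) := fun ξ => by ring
    rw [integral_congr_ae (Filter.Eventually.of_forall h1), integral_const_mul]
    have h3 : (∫ ξ : ℝ, Complex.exp (Complex.I * ξ * x) * FT ⇑f ξ) = c⁻¹ * f x := by
      rw [← FT_inversion f x, ← mul_assoc, inv_mul_cancel₀ c_ne_zero, one_mul]
    rw [h3]; ring
  rw [integral_congr_ae (Filter.Eventually.of_forall inner), integral_const_mul, ← mul_assoc,
    mul_inv_cancel₀ c_ne_zero, one_mul]

-- appended aux lemmas (test in context of main.lean by concatenation)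
lemma deriv_conjS (f : SchwartzMap ℝ ℂ) (x : ℝ) :
    deriv (⇑(conjS f)) x = conj (deriv (⇑f) x) := by
  have hd : HasDerivAt (⇑f) (deriv (⇑f) x) x := f.differentiableAt.hasDerivAt
  have h : HasDerivAt (⇑(conjS f)) (conj (deriv (⇑f) x)) x := hd.star
  exact h.deriv

lemma deriv_mulS (f g : SchwartzMap ℝ ℂ) (x : ℝ) :
    deriv (⇑(mulS f g)) x = deriv (⇑f) x * g x + f x * deriv (⇑g) x := by
  have h := (f.differentiableAt.hasDerivAt (x := x)).mul (g.differentiableAt.hasDerivAt (x := x))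
  exact h.deriv

lemma Cplus_continuous (f : SchwartzMap ℝ ℂ) : Continuous (Cplus ⇑f) := by
  rw [show Cplus ⇑f = fun x : ℝ => c * ∫ ξ in Ici (0:ℝ), Complex.exp (Complex.I * ξ * x) * FT ⇑f ξ
    from funext fun x => Cplus_def _ _]
  apply continuous_const.mul
  apply continuous_of_dominated (bound := fun ξ => ‖FT ⇑f ξ‖)
  · intro x
    exact ((Complex.continuous_exp.comp (by continuity)).mul (FT_continuous f)).aestronglyMeasurable
  · intro x
    exact Filter.Eventually.of_forall fun ξ => by rw [norm_mul, norm_exp_I_mul, one_mul]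
  · exact (FT_integrable f).norm.restrict
  · exact Filter.Eventually.of_forall fun ξ =>
      (Complex.continuous_exp.comp (by continuity)).mul continuous_const

lemma Cplus_bdd (f : SchwartzMap ℝ ℂ) : ∃ C, ∀ x, ‖Cplus ⇑f x‖ ≤ C := by
  refine ⟨(Real.sqrt (2 * Real.pi))⁻¹ * ∫ ξ in Ici (0:ℝ), ‖FT ⇑f ξ‖, fun x => ?_⟩
  rw [Cplus_def, norm_mul]
  have h1 : ‖(c : ℂ)‖ = (Real.sqrt (2 * Real.pi))⁻¹ := by
    rw [Complex.norm_real]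
    exact abs_of_nonneg (by positivity)
  have h2 : ‖∫ ξ in Ici (0:ℝ), Complex.exp (Complex.I * ξ * x) * FT ⇑f ξ‖
      ≤ ∫ ξ in Ici (0:ℝ), ‖FT ⇑f ξ‖ := by
    refine (norm_integral_le_integral_norm _).trans_eq ?_
    refine integral_congr_ae (Filter.Eventually.of_forall fun ξ => ?_)
    show ‖Complex.exp (Complex.I * ξ * x) * FT ⇑f ξ‖ = _
    rw [norm_mul, norm_exp_I_mul, one_mul]
  rw [h1]
  exact mul_le_mul_of_nonneg_left h2 (by positivity)

lemma Cplus_mul_integrable (f g : SchwartzMap ℝ ℂ) :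
    Integrable (fun x => Cplus ⇑f x * g x) := by
  obtain ⟨C, hC⟩ := Cplus_bdd f
  exact Integrable.bdd_mul g.integrable (Cplus_continuous f).aestronglyMeasurable
    (Filter.Eventually.of_forall hC)

end Aux

/-- Poisson commutativity `{β(ϰ), P} = 0`:
`∫ (|n|² + n + conj n) q' dx = 0`. -/
theorem stmt10 (q n : SchwartzMap ℝ ℂ) (ϰ : ℝ) (hϰ : 0 < ϰ)
    (hq : ∀ x : ℝ, (q x).im = 0)
    (hn : ∀ ξ : ℝ, ξ < 0 → FT (⇑n) ξ = 0)
    (hgn : SolvesGauge (⇑q) ϰ (⇑n)) :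
    (∫ x : ℝ, (((‖n x‖ ^ 2 : ℝ) : ℂ) + n x + conj (n x)) * deriv (⇑q) x) = 0 := by
  classical
  have hqc : ∀ x : ℝ, conj (q x) = q x := fun x => Complex.conj_eq_iff_im.mpr (hq x)
  set f : SchwartzMap ℝ ℂ := mulS q n + q with hfdef
  have hfS : ∀ x : ℝ, f x = q x * (n x + 1) := by
    intro x
    simp [hfdef, SchwartzMap.add_apply, mul_add]
  have hgauge : ∀ x : ℝ, deriv (⇑n) x = -Complex.I * ϰ * n x + Complex.I * Cplus (⇑f) x := by
    intro x
    have hfun : (fun y => q y * (n y + 1)) = ⇑f := funext fun y => (hfS y).symm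
    rw [hgn x, hfun]
  -- ### Part 1 : E := ∫ q (n - conj n) = 0
  have hDint : Integrable (fun x : ℝ => deriv (⇑n) x * conj (n x)) := by
    refine ((mulS (SchwartzMap.derivCLM ℝ ℂ n) (conjS n)).integrable).congr
      (Filter.Eventually.of_forall fun x => ?_)
    simp [SchwartzMap.derivCLM_apply]
  have hDconjint : Integrable (fun x : ℝ => conj (deriv (⇑n) x * conj (n x))) := by
    refine ((conjS (mulS (SchwartzMap.derivCLM ℝ ℂ n) (conjS n))).integrable).congr
      (Filter.Eventually.of_forall fun x => ?_)
    simp [SchwartzMap.derivCLM_apply]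
  set D : ℂ := ∫ x : ℝ, deriv (⇑n) x * conj (n x) with hDdef
  have hDsum : D + conj D = 0 := by
    have hG : ∀ x : ℝ, deriv (⇑(mulS n (conjS n))) x
        = deriv (⇑n) x * conj (n x) + conj (deriv (⇑n) x * conj (n x)) := by
      intro x
      rw [deriv_mulS, deriv_conjS]
      simp only [conjS_apply, map_mul, Complex.conj_conj]
      ring
    have h0 := integral_deriv_schwartz (mulS n (conjS n))
    rw [integral_congr_ae (Filter.Eventually.of_forall hG),
      integral_add hDint hDconjint, integral_conj] at h0
    exact h0
  have hCn_int : Integrable (fun x : ℝ => Cplus (⇑f) x * conj (n x)) := by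
    refine (Cplus_mul_integrable f (conjS n)).congr (Filter.Eventually.of_forall fun x => ?_)
    rfl
  have hPn_int : Integrable (fun x : ℝ => n x * conj (n x)) := by
    refine ((mulS n (conjS n)).integrable).congr (Filter.Eventually.of_forall fun x => ?_)
    rfl
  set Pn : ℂ := ∫ x : ℝ, n x * conj (n x) with hPndef
  set Cq : ℂ := ∫ x : ℝ, Cplus (⇑f) x * conj (n x) with hCqdef
  have hDval : D = (-Complex.I * ϰ) * Pn + Complex.I * Cq := by
    rw [hDdef]
    have hpt : ∀ x : ℝ, deriv (⇑n) x * conj (n x)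
        = (-Complex.I * ϰ) * (n x * conj (n x)) + Complex.I * (Cplus (⇑f) x * conj (n x)) := by
      intro x; rw [hgauge x]; ring
    rw [integral_congr_ae (Filter.Eventually.of_forall hpt),
      integral_add (hPn_int.const_mul _) (hCn_int.const_mul _),
      integral_const_mul, integral_const_mul]
  have hCq : Cq = ∫ x : ℝ, f x * conj (n x) := by
    have hzero : ∀ ξ : ℝ, ξ ∉ Ici (0:ℝ) → FT (⇑f) ξ * conj (FT (⇑n) ξ) = 0 := by
      intro ξ hξ
      rw [hn ξ (by simpa using hξ), map_zero, mul_zero]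
    rw [hCqdef, Cplus_pairing f n,
      setIntegral_eq_integral_of_forall_compl_eq_zero hzero, Parseval f n]
  have hPnc : conj Pn = Pn := by
    rw [hPndef, ← integral_conj]
    refine integral_congr_ae (Filter.Eventually.of_forall fun x => ?_)
    show conj (n x * conj (n x)) = _
    rw [map_mul, Complex.conj_conj]; ring
  set E : ℂ := ∫ x : ℝ, q x * (n x - conj (n x)) with hEdef
  have hfconj_int : Integrable (fun x : ℝ => f x * conj (n x)) := by
    refine ((mulS f (conjS n)).integrable).congr (Filter.Eventually.of_forall fun x => ?_)
    rfl
  have hfconj_int' : Integrable (fun x : ℝ => conj (f x * conj (n x))) := by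
    refine ((conjS (mulS f (conjS n))).integrable).congr (Filter.Eventually.of_forall fun x => ?_)
    rfl
  have hCqsub : Cq - conj Cq = -E := by
    rw [hCq, ← integral_conj, ← integral_sub hfconj_int hfconj_int', hEdef, ← integral_neg]
    refine integral_congr_ae (Filter.Eventually.of_forall fun x => ?_)
    show f x * conj (n x) - conj (f x * conj (n x)) = -(q x * (n x - conj (n x)))
    rw [hfS x]
    simp only [map_mul, map_add, map_one, Complex.conj_conj, hqc x]
    ring
  have hE : E = 0 := by
    have h := hDsum
    rw [hDval] at h
    have hconj : conj ((-Complex.I * ϰ) * Pn + Complex.I * Cq)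
        = (Complex.I * ϰ) * Pn + (-Complex.I) * conj Cq := by
      simp only [map_add, map_mul, map_neg, Complex.conj_I, Complex.conj_ofReal, hPnc]
      ring
    rw [hconj] at h
    have h2 : Complex.I * (Cq - conj Cq) = 0 := by linear_combination h
    rw [hCqsub] at h2
    have h3 := mul_eq_zero.mp h2
    rcases h3 with h3 | h3
    · exact absurd h3 Complex.I_ne_zero
    · linear_combination -h3
  -- ### Part 2 : integration by parts and conclusion
  set F : SchwartzMap ℝ ℂ := mulS n (conjS n) + n + conjS n with hFdef
  have hFS : ∀ x : ℝ, F x = n x * conj (n x) + n x + conj (n x) := by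
    intro x
    simp [hFdef, SchwartzMap.add_apply]
  have hgoal_int : ∀ x : ℝ, (((‖n x‖ ^ 2 : ℝ) : ℂ) + n x + conj (n x)) * deriv (⇑q) x
      = F x * deriv (⇑q) x := by
    intro x
    have hns : ((‖n x‖ ^ 2 : ℝ) : ℂ) = n x * conj (n x) := by
      rw [Complex.mul_conj']; push_cast; ring
    rw [hFS, hns]
  rw [integral_congr_ae (Filter.Eventually.of_forall hgoal_int)]
  have hK_int : Integrable (fun x : ℝ => deriv (⇑F) x * q x) := by
    refine ((mulS (SchwartzMap.derivCLM ℝ ℂ F) q).integrable).congr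
      (Filter.Eventually.of_forall fun x => ?_)
    simp [SchwartzMap.derivCLM_apply]
  have hFq'_int : Integrable (fun x : ℝ => F x * deriv (⇑q) x) := by
    refine ((mulS F (SchwartzMap.derivCLM ℝ ℂ q)).integrable).congr
      (Filter.Eventually.of_forall fun x => ?_)
    simp [SchwartzMap.derivCLM_apply]
  have hIBP : (∫ x : ℝ, F x * deriv (⇑q) x) = -∫ x : ℝ, deriv (⇑F) x * q x := by
    have h0 := integral_deriv_schwartz (mulS F q)
    rw [integral_congr_ae (Filter.Eventually.of_forall fun x => deriv_mulS F q x),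
      integral_add hK_int hFq'_int] at h0
    linear_combination h0
  rw [hIBP]
  have hderivF : ∀ x : ℝ, deriv (⇑F) x
      = deriv (⇑n) x * conj (n x) + n x * conj (deriv (⇑n) x)
        + deriv (⇑n) x + conj (deriv (⇑n) x) := by
    intro x
    have hA := (mulS n (conjS n)).differentiableAt.hasDerivAt (x := x)
    have hB := n.differentiableAt.hasDerivAt (x := x)
    have hC := (conjS n).differentiableAt.hasDerivAt (x := x)
    have hsum := ((hA.add hB).add hC).deriv
    have hcoe : ⇑F = fun y => (mulS n (conjS n)) y + n y + (conjS n) y := by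
      funext y; simp [hFdef, SchwartzMap.add_apply]
    rw [hcoe]
    rw [show (fun y => (mulS n (conjS n)) y + n y + (conjS n) y) = ⇑(mulS n (conjS n)) + ⇑n + ⇑(conjS n) from rfl, hsum, deriv_mulS, deriv_conjS]
    simp only [conjS_apply]
  -- J and its conjugate
  set J : ℂ := ∫ x : ℝ, deriv (⇑n) x * conj (n x + 1) * q x with hJdef
  have hJint : Integrable (fun x : ℝ => deriv (⇑n) x * conj (n x + 1) * q x) := by
    refine ((mulS (mulS (SchwartzMap.derivCLM ℝ ℂ n) (conjS n)) q
      + mulS (SchwartzMap.derivCLM ℝ ℂ n) q).integrable).congr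
      (Filter.Eventually.of_forall fun x => ?_)
    simp only [SchwartzMap.add_apply, mulS_apply, conjS_apply, SchwartzMap.derivCLM_apply,
      map_add, map_one]
    ring
  have hJconjint : Integrable (fun x : ℝ => conj (deriv (⇑n) x * conj (n x + 1) * q x)) := by
    refine ((conjS (mulS (mulS (SchwartzMap.derivCLM ℝ ℂ n) (conjS n)) q
      + mulS (SchwartzMap.derivCLM ℝ ℂ n) q)).integrable).congr
      (Filter.Eventually.of_forall fun x => ?_)
    simp only [conjS_apply, SchwartzMap.add_apply, mulS_apply, SchwartzMap.derivCLM_apply,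
      map_add, map_mul, map_one]
    ring
  have hKsplit : (∫ x : ℝ, deriv (⇑F) x * q x) = J + conj J := by
    have hpt : ∀ x : ℝ, deriv (⇑F) x * q x
        = deriv (⇑n) x * conj (n x + 1) * q x
          + conj (deriv (⇑n) x * conj (n x + 1) * q x) := by
      intro x
      rw [hderivF x]
      simp only [map_mul, map_add, map_one, Complex.conj_conj, hqc x]
      ring
    rw [integral_congr_ae (Filter.Eventually.of_forall hpt),
      integral_add hJint hJconjint, integral_conj, hJdef]
  -- evaluate J via the gauge equation
  set A : ℂ := ∫ x : ℝ, n x * conj (n x + 1) * q x with hAdef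
  set B : ℂ := ∫ x : ℝ, Cplus (⇑f) x * (conj (n x + 1) * q x) with hBdef
  have hAint : Integrable (fun x : ℝ => n x * conj (n x + 1) * q x) := by
    refine ((mulS (mulS n (conjS n)) q + mulS n q).integrable).congr
      (Filter.Eventually.of_forall fun x => ?_)
    simp only [SchwartzMap.add_apply, mulS_apply, conjS_apply, map_add, map_one]
    ring
  have hBint : Integrable (fun x : ℝ => Cplus (⇑f) x * (conj (n x + 1) * q x)) := by
    refine (Cplus_mul_integrable f (mulS (conjS n) q + q)).congr
      (Filter.Eventually.of_forall fun x => ?_)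
    simp only [SchwartzMap.add_apply, mulS_apply, conjS_apply, map_add, map_one]
    ring
  have hJval : J = (-Complex.I * ϰ) * A + Complex.I * B := by
    rw [hJdef]
    have hpt : ∀ x : ℝ, deriv (⇑n) x * conj (n x + 1) * q x
        = (-Complex.I * ϰ) * (n x * conj (n x + 1) * q x)
          + Complex.I * (Cplus (⇑f) x * (conj (n x + 1) * q x)) := by
      intro x; rw [hgauge x]; ring
    rw [integral_congr_ae (Filter.Eventually.of_forall hpt),
      integral_add (hAint.const_mul _) (hBint.const_mul _),
      integral_const_mul, integral_const_mul]
  have hBval : B = ∫ ξ in Ici (0:ℝ), FT (⇑f) ξ * conj (FT (⇑f) ξ) := by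
    rw [hBdef, ← Cplus_pairing f f]
    refine integral_congr_ae (Filter.Eventually.of_forall fun x => ?_)
    show Cplus (⇑f) x * (conj (n x + 1) * q x) = Cplus (⇑f) x * conj (f x)
    rw [hfS x]
    simp only [map_mul, map_add, map_one, hqc x]
    ring
  have hBreal : conj B = B := by
    rw [hBval, ← integral_conj]
    refine integral_congr_ae (Filter.Eventually.of_forall fun ξ => ?_)
    show conj (FT (⇑f) ξ * conj (FT (⇑f) ξ)) = _
    rw [map_mul, Complex.conj_conj]; ring
  have hAconj : conj A = A := by
    have hAconjint : Integrable (fun x : ℝ => conj (n x * conj (n x + 1) * q x)) := by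
      refine ((conjS (mulS (mulS n (conjS n)) q + mulS n q)).integrable).congr
        (Filter.Eventually.of_forall fun x => ?_)
      simp only [conjS_apply, SchwartzMap.add_apply, mulS_apply, map_add, map_mul, map_one]
      ring
    have hsub : A - conj A = E := by
      rw [hAdef, ← integral_conj, ← integral_sub hAint hAconjint, hEdef]
      refine integral_congr_ae (Filter.Eventually.of_forall fun x => ?_)
      show n x * conj (n x + 1) * q x - conj (n x * conj (n x + 1) * q x) = _
      simp only [map_mul, map_add, map_one, Complex.conj_conj, hqc x]
      ring
    have : A - conj A = 0 := by rw [hsub, hE]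
    linear_combination -this
  rw [hKsplit, hJval]
  have hconjJ : conj ((-Complex.I * ϰ) * A + Complex.I * B)
      = (Complex.I * ϰ) * A + (-Complex.I) * B := by
    simp only [map_add, map_mul, map_neg, Complex.conj_I, Complex.conj_ofReal, hAconj, hBreal]
    ring
  rw [hconjJ]
  ring
end

section
/- Let q be a real-valued Schwartz function on ℝ, let κ, ϰ > 0 with κ ≠ ϰ, and let m, n be Schwartz functions on ℝ whose Fourier transforms are supported in [0,∞) and which solve the gauge equations m' = −iκ m + i C₊(q(m+1)) and n' = −iϰ n + i C₊(q(n+1)). Then: (i) ∫_ℝ q(x) m(x) dx is a real number; (ii) ∫_ℝ m(x) conj(n)(x) dx = ∫_ℝ conj(m)(x) n(x) dx; and (iii) (κ − ϰ) ∫_ℝ conj(m)(x) n(x) dx = ∫_ℝ q(x) n(x) dx − ∫_ℝ q(x) m(x) dx. (With β(κ) = ∫ q m and β(ϰ) = ∫ q n, item (iii) reads ∫ conj(m) n = −(β(κ) − β(ϰ))/(κ − ϰ).) -/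
open MeasureTheory Set ComplexConjugate

open Complex Real FourierTransform Filter SchwartzMap

namespace Aux

noncomputable def c : ℝ := (Real.sqrt (2 * Real.pi))⁻¹

lemma c_pos : 0 < c := inv_pos.2 (Real.sqrt_pos.2 (by positivity))

lemma c_sq : c * c * (2 * Real.pi) = 1 := by
  have h : (0:ℝ) ≤ 2 * Real.pi := by positivity
  rw [c, ← mul_inv, Real.mul_self_sqrt h]
  field_simp

lemma FT_eq (f : ℝ → ℂ) (ξ : ℝ) : FT f ξ = (c : ℂ) * 𝓕 f (ξ / (2 * Real.pi)) := by
  rw [FT, Real.fourier_real_eq_integral_exp_smul]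
  congr 1
  refine integral_congr_ae (Filter.Eventually.of_forall fun v => ?_)
  have hr : (-2 * Real.pi * v * (ξ / (2 * Real.pi)) : ℝ) = -(ξ * v) := by
    field_simp
  simp only [smul_eq_mul, hr]
  push_cast
  ring_nf

lemma FT_fun_eq (f : ℝ → ℂ) : FT f = fun ξ => (c : ℂ) * 𝓕 f (ξ / (2 * Real.pi)) :=
  funext fun ξ => FT_eq f ξ

lemma FT_int (f : SchwartzMap ℝ ℂ) : Integrable (FT ⇑f) := by
  rw [FT_fun_eq]
  have h : Integrable ⇑(fourierTransformCLM ℂ f) := SchwartzMap.integrable (μ := volume) (fourierTransformCLM ℂ f)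
  have h2 : Integrable (fun ξ : ℝ => 𝓕 ⇑f (ξ / (2 * Real.pi))) := by
    have := h.comp_div (R := 2 * Real.pi) (by positivity)
    simpa [fourierTransformCLM_apply, SchwartzMap.fourier_coe] using this
  exact h2.const_mul _

lemma FT_cont (f : SchwartzMap ℝ ℂ) : Continuous (FT ⇑f) := by
  rw [FT_fun_eq]
  have h : Continuous (𝓕 ⇑f) := by
    have := (fourierTransformCLM ℂ f).continuous
    simpa [fourierTransformCLM_apply, SchwartzMap.fourier_coe] using this
  exact continuous_const.mul (h.comp (continuous_id.div_const _))

lemma inv_Ici (g : SchwartzMap ℝ ℂ) (hg : ∀ ξ < (0:ℝ), FT ⇑g ξ = 0) (x : ℝ) :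
    (c:ℂ) * ∫ ξ in Ici (0:ℝ), Complex.exp (Complex.I*ξ*x) * FT ⇑g ξ = g x := by
  have h2π : (2 * Real.pi) ≠ 0 := by positivity
  have hfull : ∫ ξ in Ici (0:ℝ), Complex.exp (Complex.I*ξ*x) * FT ⇑g ξ
      = ∫ ξ : ℝ, Complex.exp (Complex.I*ξ*x) * FT ⇑g ξ :=
    setIntegral_eq_integral_of_forall_compl_eq_zero (fun ξ hξ => by
      rw [hg ξ (by simpa using hξ), mul_zero])
  rw [hfull]
  set h : ℝ → ℂ := fun u => Complex.exp (Complex.I * (2*Real.pi*u) * x) * 𝓕 ⇑g u with hh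
  have hcong : (fun ξ : ℝ => Complex.exp (Complex.I*ξ*x) * FT ⇑g ξ)
      = fun ξ => (c:ℂ) * h (ξ / (2*Real.pi)) := by
    funext ξ
    rw [FT_eq, hh]
    push_cast
    rw [show (2*(Real.pi:ℂ)) * ((ξ:ℂ)/(2*(Real.pi:ℂ))) = (ξ:ℂ) by
      rw [mul_comm]
      exact div_mul_cancel₀ _ (by exact_mod_cast h2π)]
    ring
  rw [hcong, integral_const_mul, MeasureTheory.Measure.integral_comp_div h (2*Real.pi)]
  have habs : |2 * Real.pi| = 2 * Real.pi := abs_of_pos (by positivity)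
  rw [habs]
  have hint : ∫ u : ℝ, h u = 𝓕 (𝓕 ⇑g) (-x) := by
    rw [Real.fourier_real_eq_integral_exp_smul]
    refine integral_congr_ae (Filter.Eventually.of_forall fun v => ?_)
    have hr : (-2 * Real.pi * v * (-x) : ℝ) = 2 * Real.pi * v * x := by ring
    simp only [smul_eq_mul, hr, hh]
    push_cast
    ring_nf
  have hinv : 𝓕 (𝓕 ⇑g) (-x) = g x := by
    rw [← Real.fourierInv_eq_fourier_neg]
    have h1 : Integrable (𝓕 ⇑g) := by
      have := SchwartzMap.integrable (μ := volume) (fourierTransformCLM ℂ g)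
      simpa [fourierTransformCLM_apply, SchwartzMap.fourier_coe] using this
    have := g.continuous.fourierInv_fourier_eq (SchwartzMap.integrable (μ := volume) g) h1
    exact congrFun this x
  rw [hint, hinv, Complex.real_smul]
  have hc : ((c:ℂ) * ((c:ℂ) * (((2*Real.pi : ℝ):ℂ) * g x))) = (((c * c * (2*Real.pi) : ℝ)):ℂ) * g x := by
    push_cast; ring
  rw [hc, c_sq]
  simp


lemma FT_def' (h : ℝ → ℂ) (ξ : ℝ) :
    FT h ξ = (c:ℂ) * ∫ x : ℝ, Complex.exp (-(Complex.I * ξ * x)) * h x := by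
  rw [FT, c]

lemma integrable_conj {f : ℝ → ℂ} {μ : Measure ℝ} (h : Integrable f μ) :
    Integrable (fun x => conj (f x)) μ := by
  have := ContinuousLinearMap.integrable_comp
    (Complex.conjCLE.toContinuousLinearMap) h
  simpa using this

lemma swap_helper (K : ℝ × ℝ → ℂ) (hK : Continuous K) (hK1 : ∀ p, ‖K p‖ ≤ 1)
    (φ ψ : ℝ → ℂ) (hφ : Integrable φ volume) (hψ : Integrable ψ (volume.restrict (Ici 0))) :
    ∫ x : ℝ, ∫ ξ in Ici (0:ℝ), K (x, ξ) * ψ ξ * φ x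
      = ∫ ξ in Ici (0:ℝ), ∫ x : ℝ, K (x, ξ) * ψ ξ * φ x := by
  apply integral_integral_swap
  have hbase : Integrable (fun p : ℝ × ℝ => φ p.1 * ψ p.2)
      (volume.prod (volume.restrict (Ici 0))) := hφ.mul_prod hψ
  have h2 : Integrable (fun p : ℝ × ℝ => K p * (φ p.1 * ψ p.2))
      (volume.prod (volume.restrict (Ici 0))) :=
    hbase.bdd_mul hK.aestronglyMeasurable (ae_of_all _ hK1)
  exact h2.congr (ae_of_all _ fun p => by simp only [Function.uncurry]; ring)

lemma K_neg_cont : Continuous (fun p : ℝ × ℝ => Complex.exp (-(Complex.I * p.2 * p.1))) := by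
  fun_prop

lemma K_pos_cont : Continuous (fun p : ℝ × ℝ => Complex.exp (Complex.I * p.2 * p.1)) := by
  fun_prop

lemma norm_exp_I_mul (a b : ℝ) : ‖Complex.exp (Complex.I * a * b)‖ = 1 := by
  rw [Complex.norm_exp]
  simp [Complex.mul_re]

lemma norm_exp_neg_I_mul (a b : ℝ) : ‖Complex.exp (-(Complex.I * a * b))‖ = 1 := by
  rw [Complex.norm_exp]
  simp [Complex.mul_re]

lemma conj_exp_I (a b : ℝ) :
    conj (Complex.exp (Complex.I * a * b)) = Complex.exp (-(Complex.I * a * b)) := by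
  rw [← Complex.exp_conj]
  congr 1
  simp [map_mul, Complex.conj_ofReal]

lemma conjFT (f : ℝ → ℂ) (ξ : ℝ) :
    conj (FT f ξ) = (c:ℂ) * ∫ x : ℝ, Complex.exp (Complex.I * ξ * x) * conj (f x) := by
  rw [FT_def', map_mul, ← integral_conj]
  congr 1
  · simp [Complex.conj_ofReal]
  refine integral_congr_ae (Filter.Eventually.of_forall fun x => ?_)
  show conj (Complex.exp (-(Complex.I * ξ * x)) * f x)
      = Complex.exp (Complex.I * ξ * x) * conj (f x)
  rw [map_mul, ← Complex.exp_conj]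
  congr 2
  simp [map_mul, Complex.conj_ofReal]

lemma pairA (f g : SchwartzMap ℝ ℂ) :
    ∫ x : ℝ, conj (Cplus ⇑f x) * g x = ∫ ξ in Ici (0:ℝ), conj (FT ⇑f ξ) * FT ⇑g ξ := by
  have key : ∀ x : ℝ, conj (Cplus ⇑f x) * g x
      = (c:ℂ) * ∫ ξ in Ici (0:ℝ),
          Complex.exp (-(Complex.I * ξ * x)) * conj (FT ⇑f ξ) * g x := by
    intro x
    rw [Cplus, map_mul, ← integral_conj, MeasureTheory.integral_mul_const, mul_assoc]
    congr 1
    · simp [c, Complex.conj_ofReal]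
    congr 1
    refine integral_congr_ae (Filter.Eventually.of_forall fun ξ => ?_)
    simp only [map_mul, conj_exp_I]
  simp_rw [key]
  rw [MeasureTheory.integral_const_mul]
  rw [swap_helper _ K_neg_cont (fun p => le_of_eq (norm_exp_neg_I_mul _ _))
    (⇑g) (fun ξ => conj (FT ⇑f ξ)) (g.integrable (μ := volume))
    ((integrable_conj (FT_int f)).restrict)]
  rw [← MeasureTheory.integral_const_mul]
  refine integral_congr_ae (Filter.Eventually.of_forall fun ξ => ?_)
  have : ∀ x : ℝ, Complex.exp (-(Complex.I * ξ * x)) * conj (FT ⇑f ξ) * g x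
      = conj (FT ⇑f ξ) * (Complex.exp (-(Complex.I * ξ * x)) * g x) := fun x => by ring
  simp_rw [this]
  rw [MeasureTheory.integral_const_mul, FT_def' (⇑g) ξ]
  ring

lemma pairB (f g : SchwartzMap ℝ ℂ) (hg : ∀ ξ < (0:ℝ), FT ⇑g ξ = 0) :
    ∫ x : ℝ, conj (f x) * g x = ∫ ξ in Ici (0:ℝ), conj (FT ⇑f ξ) * FT ⇑g ξ := by
  have key : ∀ x : ℝ, conj (f x) * g x
      = (c:ℂ) * ∫ ξ in Ici (0:ℝ),
          Complex.exp (Complex.I * ξ * x) * FT ⇑g ξ * conj (f x) := by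
    intro x
    rw [← inv_Ici g hg x, MeasureTheory.integral_mul_const]
    ring
  simp_rw [key]
  rw [MeasureTheory.integral_const_mul]
  rw [swap_helper _ K_pos_cont (fun p => le_of_eq (norm_exp_I_mul _ _))
    (fun x => conj (f x)) (FT ⇑g) (integrable_conj (f.integrable (μ := volume)))
    ((FT_int g).restrict)]
  rw [← MeasureTheory.integral_const_mul]
  refine integral_congr_ae (Filter.Eventually.of_forall fun ξ => ?_)
  have : ∀ x : ℝ, Complex.exp (Complex.I * ξ * x) * FT ⇑g ξ * conj (f x)
      = FT ⇑g ξ * (Complex.exp (Complex.I * ξ * x) * conj (f x)) := fun x => by ring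
  simp_rw [this]
  rw [MeasureTheory.integral_const_mul, ← mul_assoc, mul_comm ((c:ℂ)) (FT ⇑g ξ), mul_assoc,
    ← conjFT]
  ring

lemma pairP (f g : SchwartzMap ℝ ℂ) (hg : ∀ ξ < (0:ℝ), FT ⇑g ξ = 0) :
    ∫ x : ℝ, conj (Cplus ⇑f x) * g x = ∫ x : ℝ, conj (f x) * g x := by
  rw [pairA f g, pairB f g hg]


lemma schwartz_temperate (f : SchwartzMap ℝ ℂ) : Function.HasTemperateGrowth ⇑f := by
  refine ⟨f.smooth ⊤, fun n => ?_⟩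
  obtain ⟨C, hC⟩ := f.decay' 0 n
  exact ⟨0, C, fun x => by
    have h := hC x
    simp only [pow_zero, one_mul] at h
    simp only [pow_zero, mul_one]
    exact h⟩

noncomputable def mulS (a b : SchwartzMap ℝ ℂ) : SchwartzMap ℝ ℂ :=
  SchwartzMap.bilinLeftCLM (ContinuousLinearMap.mul ℝ ℂ) (schwartz_temperate b) a

lemma mulS_apply (a b : SchwartzMap ℝ ℂ) (x : ℝ) : mulS a b x = a x * b x := by rfl

lemma bddS (f : SchwartzMap ℝ ℂ) : ∃ C, ∀ x, ‖f x‖ ≤ C :=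
  ⟨‖f.toBoundedContinuousFunction‖, fun x => by
    simpa using f.toBoundedContinuousFunction.norm_coe_le_norm x⟩

lemma int_mul (f : SchwartzMap ℝ ℂ) {ψ : ℝ → ℂ} (hψ : Integrable ψ volume) :
    Integrable (fun x => f x * ψ x) volume :=
  hψ.bdd_mul f.continuous.aestronglyMeasurable (ae_of_all _ (bddS f).choose_spec)

lemma cont_conj : Continuous (fun z : ℂ => conj z) := Complex.continuous_conj

lemma int_conj_mul (f : SchwartzMap ℝ ℂ) {ψ : ℝ → ℂ} (hψ : Integrable ψ volume) :
    Integrable (fun x => conj (f x) * ψ x) volume := by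
  refine hψ.bdd_mul (c := (bddS f).choose) (cont_conj.comp f.continuous).aestronglyMeasurable ?_
  obtain ⟨C, hC⟩ := bddS f
  exact ae_of_all _ fun x => by simpa using (bddS f).choose_spec x

lemma deriv_eq (a : SchwartzMap ℝ ℂ) : deriv ⇑a = ⇑(SchwartzMap.derivCLM ℝ ℂ a) :=
  funext fun x => (SchwartzMap.derivCLM_apply ℝ a x).symm

lemma tendsto_schwartz_atTop (a : SchwartzMap ℝ ℂ) : Filter.Tendsto ⇑a Filter.atTop (nhds 0) :=
  (zero_at_infty a).mono_left (by rw [cocompact_eq_atBot_atTop]; exact le_sup_right)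

lemma tendsto_schwartz_atBot (a : SchwartzMap ℝ ℂ) : Filter.Tendsto ⇑a Filter.atBot (nhds 0) :=
  (zero_at_infty a).mono_left (by rw [cocompact_eq_atBot_atTop]; exact le_sup_left)

lemma parts (a b : SchwartzMap ℝ ℂ) :
    (∫ x : ℝ, conj (deriv (⇑a) x) * b x) + (∫ x : ℝ, conj (a x) * deriv (⇑b) x) = 0 := by
  set F : ℝ → ℂ := fun x => conj (a x) * b x with hFdef
  set F' : ℝ → ℂ := fun x => conj (deriv (⇑a) x) * b x + conj (a x) * deriv (⇑b) x with hF'def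
  have hF : ∀ x : ℝ, HasDerivAt F (F' x) x := by
    intro x
    have h1 : HasDerivAt (⇑a) (deriv (⇑a) x) x := a.differentiableAt.hasDerivAt
    have h2 : HasDerivAt (⇑b) (deriv (⇑b) x) x := b.differentiableAt.hasDerivAt
    have h3 := (h1.star).mul h2
    simp only [hFdef, hF'def, starRingEnd_apply]
    exact h3
  have hI1 : Integrable (fun x => conj (deriv (⇑a) x) * b x) volume := by
    rw [deriv_eq a]
    exact int_conj_mul _ (b.integrable (μ := volume))
  have hI2 : Integrable (fun x => conj (a x) * deriv (⇑b) x) volume := by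
    rw [deriv_eq b]
    exact int_conj_mul _ ((SchwartzMap.derivCLM ℝ ℂ b).integrable (μ := volume))
  have hF'int : Integrable F' volume := hI1.add hI2
  have htop : Filter.Tendsto F Filter.atTop (nhds 0) := by
    have := ((cont_conj.tendsto 0).comp (tendsto_schwartz_atTop a)).mul (tendsto_schwartz_atTop b)
    simpa [hFdef, Function.comp] using this
  have hbot : Filter.Tendsto F Filter.atBot (nhds 0) := by
    have := ((cont_conj.tendsto 0).comp (tendsto_schwartz_atBot a)).mul (tendsto_schwartz_atBot b)
    simpa [hFdef, Function.comp] using this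
  have h1 : ∫ x in Iic (0:ℝ), F' x = F 0 - 0 :=
    integral_Iic_of_hasDerivAt_of_tendsto' (fun x _ => hF x) hF'int.integrableOn hbot
  have h2 : ∫ x in Ioi (0:ℝ), F' x = 0 - F 0 :=
    integral_Ioi_of_hasDerivAt_of_tendsto' (fun x _ => hF x) hF'int.integrableOn htop
  have h3 : (∫ x in Iic (0:ℝ), F' x) + ∫ x in Ioi (0:ℝ), F' x = ∫ x : ℝ, F' x :=
    intervalIntegral.integral_Iic_add_Ioi hF'int.integrableOn hF'int.integrableOn
  have h4 : ∫ x : ℝ, F' x = 0 := by rw [← h3, h1, h2]; ring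
  rw [← integral_add hI1 hI2]
  exact h4

lemma keyG (q a b : SchwartzMap ℝ ℂ) (κ ϰ : ℝ)
    (hq : ∀ x : ℝ, (q x).im = 0)
    (ha : ∀ ξ : ℝ, ξ < 0 → FT (⇑a) ξ = 0) (hb : ∀ ξ : ℝ, ξ < 0 → FT (⇑b) ξ = 0)
    (hga : SolvesGauge (⇑q) κ (⇑a)) (hgb : SolvesGauge (⇑q) ϰ (⇑b)) :
    ((κ : ℂ) - (ϰ : ℂ)) * (∫ x : ℝ, conj (a x) * b x)
      = (∫ x : ℝ, q x * b x) - ∫ x : ℝ, q x * conj (a x) := by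
  have hqc : ∀ x : ℝ, conj (q x) = q x := fun x => Complex.conj_eq_iff_im.2 (hq x)
  set fa : SchwartzMap ℝ ℂ := mulS q a + q with hfadef
  set fb : SchwartzMap ℝ ℂ := mulS q b + q with hfbdef
  have hfa : ⇑fa = fun y => q y * (a y + 1) := by
    funext y
    simp [hfadef, mulS_apply]
    ring
  have hfb : ⇑fb = fun y => q y * (b y + 1) := by
    funext y
    simp [hfbdef, mulS_apply]
    ring
  -- pointwise identities for Cplus
  have hPa : ∀ x : ℝ, Cplus ⇑fa x = -Complex.I * deriv (⇑a) x + (κ:ℂ) * a x := by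
    intro x
    have h := hga x
    rw [← hfa] at h
    have h2 : Complex.I * Cplus ⇑fa x = deriv (⇑a) x + Complex.I * κ * a x := by
      linear_combination -h
    linear_combination (-Complex.I) * h2 + (Cplus ⇑fa x - (κ:ℂ) * a x) * Complex.I_sq
  have hPb : ∀ x : ℝ, Cplus ⇑fb x = -Complex.I * deriv (⇑b) x + (ϰ:ℂ) * b x := by
    intro x
    have h := hgb x
    rw [← hfb] at h
    have h2 : Complex.I * Cplus ⇑fb x = deriv (⇑b) x + Complex.I * ϰ * b x := by
      linear_combination -h
    linear_combination (-Complex.I) * h2 + (Cplus ⇑fb x - (ϰ:ℂ) * b x) * Complex.I_sq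
  -- integrability facts
  have hIab : Integrable (fun x => conj (a x) * b x) volume :=
    int_conj_mul a (b.integrable (μ := volume))
  have hIa'b : Integrable (fun x => conj (deriv (⇑a) x) * b x) volume := by
    rw [deriv_eq a]; exact int_conj_mul _ (b.integrable (μ := volume))
  have hIab' : Integrable (fun x => conj (a x) * deriv (⇑b) x) volume := by
    rw [deriv_eq b]; exact int_conj_mul _ ((SchwartzMap.derivCLM ℝ ℂ b).integrable (μ := volume))
  have hIqab : Integrable (fun x => q x * (conj (a x) * b x)) volume := int_mul q hIab
  have hIqb : Integrable (fun x => q x * b x) volume := int_mul q (b.integrable (μ := volume))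
  have hIqca : Integrable (fun x => q x * conj (a x)) volume := by
    have : Integrable (fun x => conj (a x) * q x) volume :=
      int_conj_mul a (q.integrable (μ := volume))
    exact this.congr (ae_of_all _ fun x => by ring)
  -- first pairing equation
  have EA : ∫ x : ℝ, conj (Cplus ⇑fa x) * b x
      = (∫ x : ℝ, q x * (conj (a x) * b x)) + ∫ x : ℝ, q x * b x := by
    rw [pairP fa b hb]
    have : ∀ x : ℝ, conj (fa x) * b x = q x * (conj (a x) * b x) + q x * b x := by
      intro x
      rw [hfa]
      simp only [map_mul, map_add, hqc, map_one]
      ring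
    simp_rw [this]
    exact integral_add hIqab hIqb
  have EAL : ∫ x : ℝ, conj (Cplus ⇑fa x) * b x
      = (κ:ℂ) * (∫ x : ℝ, conj (a x) * b x) + Complex.I * ∫ x : ℝ, conj (deriv (⇑a) x) * b x := by
    have : ∀ x : ℝ, conj (Cplus ⇑fa x) * b x
        = (κ:ℂ) * (conj (a x) * b x) + Complex.I * (conj (deriv (⇑a) x) * b x) := by
      intro x
      rw [hPa x]
      simp only [map_add, map_mul, map_neg, Complex.conj_I, Complex.conj_ofReal]
      ring
    simp_rw [this]
    rw [integral_add (hIab.const_mul _) (hIa'b.const_mul _),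
      MeasureTheory.integral_const_mul, MeasureTheory.integral_const_mul]
  -- second pairing equation
  have EB : ∫ x : ℝ, conj (a x) * Cplus ⇑fb x
      = (∫ x : ℝ, q x * (conj (a x) * b x)) + ∫ x : ℝ, q x * conj (a x) := by
    have step1 : ∫ x : ℝ, conj (a x) * Cplus ⇑fb x
        = conj (∫ x : ℝ, conj (Cplus ⇑fb x) * a x) := by
      rw [← integral_conj]
      refine integral_congr_ae (Filter.Eventually.of_forall fun x => ?_)
      simp only [map_mul, Complex.conj_conj]
      ring
    rw [step1, pairP fb a ha, ← integral_conj]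
    have : ∀ x : ℝ, conj (conj (fb x) * a x) = q x * (conj (a x) * b x) + q x * conj (a x) := by
      intro x
      rw [hfb]
      simp only [map_mul, map_add, map_one, Complex.conj_conj, hqc]
      ring
    simp_rw [this]
    exact integral_add hIqab hIqca
  have EBL : ∫ x : ℝ, conj (a x) * Cplus ⇑fb x
      = (ϰ:ℂ) * (∫ x : ℝ, conj (a x) * b x) - Complex.I * ∫ x : ℝ, conj (a x) * deriv (⇑b) x := by
    have : ∀ x : ℝ, conj (a x) * Cplus ⇑fb x
        = (ϰ:ℂ) * (conj (a x) * b x) - Complex.I * (conj (a x) * deriv (⇑b) x) := by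
      intro x
      rw [hPb x]
      ring
    simp_rw [this]
    rw [MeasureTheory.integral_sub (hIab.const_mul _) (hIab'.const_mul _),
      MeasureTheory.integral_const_mul, MeasureTheory.integral_const_mul]
  have hparts := parts a b
  have e1 : (κ:ℂ) * (∫ x : ℝ, conj (a x) * b x)
      + Complex.I * ∫ x : ℝ, conj (deriv (⇑a) x) * b x
      = (∫ x : ℝ, q x * (conj (a x) * b x)) + ∫ x : ℝ, q x * b x := by
    rw [← EAL, EA]
  have e2 : (ϰ:ℂ) * (∫ x : ℝ, conj (a x) * b x)
      - Complex.I * ∫ x : ℝ, conj (a x) * deriv (⇑b) x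
      = (∫ x : ℝ, q x * (conj (a x) * b x)) + ∫ x : ℝ, q x * conj (a x) := by
    rw [← EBL, EB]
  linear_combination e1 - e2 - Complex.I * hparts

end Aux


/-- With `β(κ) = ∫ q m` and `β(ϰ) = ∫ q n`:
(i) `∫ q m` is real; (ii) `∫ m conj n = ∫ conj m n`; and
(iii) `(κ - ϰ) ∫ conj m · n = ∫ q n - ∫ q m`, i.e. `∫ conj m · n = -(β(κ)-β(ϰ))/(κ-ϰ)`. -/
theorem stmt11 (q m n : SchwartzMap ℝ ℂ) (κ ϰ : ℝ) (hκ : 0 < κ) (hϰ : 0 < ϰ) (hne : κ ≠ ϰ)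
    (hq : ∀ x : ℝ, (q x).im = 0)
    (hm : ∀ ξ : ℝ, ξ < 0 → FT (⇑m) ξ = 0) (hn : ∀ ξ : ℝ, ξ < 0 → FT (⇑n) ξ = 0)
    (hgm : SolvesGauge (⇑q) κ (⇑m)) (hgn : SolvesGauge (⇑q) ϰ (⇑n)) :
    (∫ x : ℝ, q x * m x).im = 0 ∧
      (∫ x : ℝ, m x * conj (n x)) = (∫ x : ℝ, conj (m x) * n x) ∧
      ((κ : ℂ) - (ϰ : ℂ)) * (∫ x : ℝ, conj (m x) * n x)
        = (∫ x : ℝ, q x * n x) - (∫ x : ℝ, q x * m x) := by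
  have hqc : ∀ x : ℝ, conj (q x) = q x := fun x => Complex.conj_eq_iff_im.2 (hq x)
  have hconjint : ∀ f : SchwartzMap ℝ ℂ,
      (∫ x : ℝ, q x * conj (f x)) = conj (∫ x : ℝ, q x * f x) := by
    intro f
    rw [← integral_conj]
    refine integral_congr_ae (Filter.Eventually.of_forall fun x => ?_)
    show q x * conj (f x) = conj (q x * f x)
    rw [map_mul, hqc]
  have hm0 := Aux.keyG q m m κ κ hq hm hm hgm hgm
  have hn0 := Aux.keyG q n n ϰ ϰ hq hn hn hgn hgn
  have hmm : (∫ x : ℝ, q x * conj (m x)) = ∫ x : ℝ, q x * m x := by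
    rw [sub_self, zero_mul] at hm0
    linear_combination hm0
  have hnn : (∫ x : ℝ, q x * conj (n x)) = ∫ x : ℝ, q x * n x := by
    rw [sub_self, zero_mul] at hn0
    linear_combination hn0
  have h1 := Aux.keyG q m n κ ϰ hq hm hn hgm hgn
  have h2 := Aux.keyG q n m ϰ κ hq hn hm hgn hgm
  rw [hmm] at h1
  rw [hnn] at h2
  refine ⟨?_, ?_, ?_⟩
  · have : conj (∫ x : ℝ, q x * m x) = ∫ x : ℝ, q x * m x := by
      rw [← hconjint m, hmm]
    exact Complex.conj_eq_iff_im.1 this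
  · have hcomm : (∫ x : ℝ, m x * conj (n x)) = ∫ x : ℝ, conj (n x) * m x :=
      integral_congr_ae (Filter.Eventually.of_forall fun x => by ring)
    have hne' : ((κ:ℂ) - ϰ) ≠ 0 := by
      rw [sub_ne_zero]
      exact_mod_cast hne
    have hz : ((κ:ℂ) - ϰ) * ((∫ x : ℝ, conj (n x) * m x) - ∫ x : ℝ, conj (m x) * n x) = 0 := by
      linear_combination -h2 - h1
    rcases mul_eq_zero.1 hz with h | h
    · exact absurd h hne'
    · rw [hcomm]
      exact sub_eq_zero.1 h
  · exact h1
end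

section
/- Fix c > 0 and let Q_c(x) = 2c/(c²x² + 1) and f(x) = 1/(cx + i). Then f satisfies the eigenvalue equation −i f'(x) − C₊(Q_c · f)(x) = −(c/2) f(x) for all x ∈ ℝ. (Thus when q = Q_c is the Benjamin–Ono soliton profile, the Lax operator L = −i∂ − C₊ q has eigenvalue −c/2 with eigenvector (cx+i)^{-1}.) -/
open MeasureTheory Set ComplexConjugate
open Filter

lemma intOn_cexp {w : ℂ} (hw : 0 < w.re) :
    IntegrableOn (fun ξ : ℝ => Complex.exp (-(w * ξ))) (Ioi 0) := by
  apply Integrable.mono' (exp_neg_integrableOn_Ioi 0 hw)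
  · exact (Complex.continuous_exp.comp (by continuity)).aestronglyMeasurable.restrict
  · filter_upwards with ξ
    simp [Complex.norm_exp, neg_mul]

lemma intOn_mul_cexp {w : ℂ} (hw : 0 < w.re) :
    IntegrableOn (fun ξ : ℝ => (ξ : ℂ) * Complex.exp (-(w * ξ))) (Ioi 0) := by
  have h := integrableOn_rpow_mul_exp_neg_mul_rpow (p := 1) (s := 1) (b := w.re)
    (by norm_num) (by norm_num) hw
  apply Integrable.mono' h
  · exact ((Complex.continuous_ofReal.mul (Complex.continuous_exp.comp (by continuity)))).aestronglyMeasurable.restrict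
  · filter_upwards [ae_restrict_mem measurableSet_Ioi] with ξ (hξ : 0 < ξ)
    simp [Complex.norm_exp, neg_mul, abs_of_pos hξ]

lemma tendsto_cexp_atTop {w : ℂ} (hw : 0 < w.re) :
    Tendsto (fun ξ : ℝ => Complex.exp (-(w * ξ))) atTop (nhds 0) := by
  rw [tendsto_zero_iff_norm_tendsto_zero]
  have : (fun ξ : ℝ => ‖Complex.exp (-(w * ξ))‖) = fun ξ : ℝ => Real.exp (-(w.re * ξ)) := by
    ext ξ; simp [Complex.norm_exp, neg_mul]
  rw [this]
  exact Real.tendsto_exp_atBot.comp (tendsto_neg_atBot_iff.mpr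
    (Tendsto.const_mul_atTop hw tendsto_id))

lemma integral_cexp_Ioi {w : ℂ} (hw : 0 < w.re) :
    ∫ ξ in Ioi (0:ℝ), Complex.exp (-(w * ξ)) = 1 / w := by
  have hw0 : w ≠ 0 := fun h => by simp [h] at hw
  have hder : ∀ ξ ∈ Ici (0:ℝ), HasDerivAt (fun ξ : ℝ => -Complex.exp (-(w * ξ)) / w)
      (Complex.exp (-(w * ξ))) ξ := by
    intro ξ _
    have h1 : HasDerivAt (fun z : ℂ => -Complex.exp (-(w * z)) / w) (Complex.exp (-(w * ξ))) (ξ:ℂ) := by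
      have := ((Complex.hasDerivAt_exp (-(w * ξ))).comp (ξ:ℂ)
        (((hasDerivAt_id (ξ:ℂ)).const_mul w).neg))
      have h2 := ((this.neg).div_const w)
      exact h2.congr_deriv (by rw [mul_one, mul_neg, neg_neg, mul_div_assoc, div_self hw0, mul_one])
    exact h1.comp_ofReal
  have htend : Tendsto (fun ξ : ℝ => -Complex.exp (-(w * ξ)) / w) atTop (nhds 0) := by
    simpa using ((tendsto_cexp_atTop hw).neg.div_const w)
  have := integral_Ioi_of_hasDerivAt_of_tendsto' hder (intOn_cexp hw) htend
  rw [this]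
  simp [div_eq_mul_inv, one_div]

lemma integral_mul_cexp_Ioi {w : ℂ} (hw : 0 < w.re) :
    ∫ ξ in Ioi (0:ℝ), (ξ : ℂ) * Complex.exp (-(w * ξ)) = 1 / w ^ 2 := by
  have hw0 : w ≠ 0 := fun h => by simp [h] at hw
  have hder : ∀ ξ ∈ Ici (0:ℝ), HasDerivAt
      (fun ξ : ℝ => -((ξ : ℂ) * w + 1) / w ^ 2 * Complex.exp (-(w * ξ)))
      ((ξ : ℂ) * Complex.exp (-(w * ξ))) ξ := by
    intro ξ _
    have h1 : HasDerivAt (fun z : ℂ => -(z * w + 1) / w ^ 2 * Complex.exp (-(w * z)))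
        ((ξ:ℂ) * Complex.exp (-(w * ξ))) (ξ:ℂ) := by
      have he : HasDerivAt (fun z : ℂ => Complex.exp (-(w * z))) (-w * Complex.exp (-(w * ξ))) (ξ:ℂ) := by
        have := ((Complex.hasDerivAt_exp (-(w * ξ))).comp (ξ:ℂ)
          (((hasDerivAt_id (ξ:ℂ)).const_mul w).neg))
        exact this.congr_deriv (by ring)
      have hp : HasDerivAt (fun z : ℂ => -(z * w + 1) / w ^ 2) (-w / w ^ 2) (ξ:ℂ) := by
        have := (((hasDerivAt_id (ξ:ℂ)).mul_const w).add_const 1).neg.div_const (w ^ 2)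
        simpa using this
      have := hp.mul he
      refine this.congr_deriv ?_
      field_simp
      ring
    exact h1.comp_ofReal
  have hreal : Tendsto (fun ξ : ℝ => ξ * Real.exp (-(w.re * ξ))) atTop (nhds 0) := by
    have h := (Real.tendsto_pow_mul_exp_neg_atTop_nhds_zero 1).comp
      (Tendsto.const_mul_atTop hw (tendsto_id (α := ℝ)))
    have h2 := h.const_mul (w.re)⁻¹
    rw [mul_zero] at h2
    apply h2.congr
    intro ξ
    simp only [Function.comp_apply, pow_one, id_eq]
    field_simp
  have hc1 : Tendsto (fun ξ : ℝ => (ξ : ℂ) * Complex.exp (-(w * ξ))) atTop (nhds 0) := by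
    apply squeeze_zero_norm' _ hreal
    filter_upwards [eventually_ge_atTop (0:ℝ)] with ξ hξ
    simp [Complex.norm_exp, neg_mul, abs_of_nonneg hξ]
  have htend : Tendsto (fun ξ : ℝ => -((ξ : ℂ) * w + 1) / w ^ 2 * Complex.exp (-(w * ξ)))
      atTop (nhds 0) := by
    have h := (hc1.const_mul (-(1/w))).add ((tendsto_cexp_atTop hw).const_mul (-(1/w^2)))
    simp only [mul_zero, add_zero] at h
    apply h.congr
    intro ξ
    field_simp
    ring
  have := integral_Ioi_of_hasDerivAt_of_tendsto' hder (intOn_mul_cexp hw) htend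
  rw [this]
  simp
  field_simp

noncomputable def Mfun (c : ℝ) (ξ : ℝ) : ℂ :=
  (-(2 * (Real.pi : ℂ) * Complex.I / c)) * (max ξ 0 : ℝ) * Complex.exp ((-(ξ / c) : ℝ) : ℂ) -
    (Real.pi : ℂ) * Complex.I * Complex.exp ((-(|ξ| / c) : ℝ) : ℂ)

lemma Mfun_continuous {c : ℝ} : Continuous (Mfun c) := by
  unfold Mfun
  fun_prop

section
variable {c : ℝ} (hc : 0 < c) (x : ℝ)

lemma wre : ((((c⁻¹ : ℝ) : ℂ) - Complex.I * x)).re = c⁻¹ := by simp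

lemma vre : ((((c⁻¹ : ℝ) : ℂ) + Complex.I * x)).re = c⁻¹ := by simp

include hc

lemma integrand_Ioi_eq : ∀ ξ ∈ Ioi (0:ℝ),
    Complex.exp (Complex.I * ξ * x) * Mfun c ξ =
      (-(2 * (Real.pi : ℂ) * Complex.I / c)) *
          ((ξ : ℂ) * Complex.exp (-(((((c⁻¹ : ℝ) : ℂ) - Complex.I * x)) * ξ))) +
        (-((Real.pi : ℂ) * Complex.I)) *
          Complex.exp (-(((((c⁻¹ : ℝ) : ℂ) - Complex.I * x)) * ξ)) := by
  intro ξ hξ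
  have hξ0 : (0:ℝ) ≤ ξ := le_of_lt hξ
  have hexp : Complex.exp (Complex.I * ξ * x) * Complex.exp ((-(ξ / c) : ℝ) : ℂ) =
      Complex.exp (-(((((c⁻¹ : ℝ) : ℂ) - Complex.I * x)) * ξ)) := by
    rw [← Complex.exp_add]
    congr 1
    push_cast
    ring
  unfold Mfun
  rw [max_eq_left hξ0, abs_of_nonneg hξ0]
  linear_combination ((-(2 * (Real.pi : ℂ) * Complex.I / c)) * ξ -
    (Real.pi : ℂ) * Complex.I) * hexp

lemma integrand_Iio_eq : ∀ ξ ∈ Iio (0:ℝ),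
    Complex.exp (Complex.I * ξ * x) * Mfun c ξ =
      (-((Real.pi : ℂ) * Complex.I)) *
        Complex.exp (-(((((c⁻¹ : ℝ) : ℂ) + Complex.I * x)) * (-ξ : ℝ))) := by
  intro ξ hξ
  have hξ0 : ξ ≤ 0 := le_of_lt hξ
  unfold Mfun
  rw [max_eq_right hξ0, abs_of_nonpos hξ0]
  push_cast
  rw [mul_zero, zero_mul, zero_sub, mul_comm (Complex.exp _), mul_neg, neg_mul, neg_neg,
    mul_assoc, ← Complex.exp_add]
  congr 2
  push_cast
  ring

lemma intM_Ioi :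
    ∫ ξ in Ioi (0:ℝ), Complex.exp (Complex.I * ξ * x) * Mfun c ξ =
      (-(2 * (Real.pi : ℂ) * Complex.I / c)) * (1 / ((((c⁻¹ : ℝ) : ℂ) - Complex.I * x)) ^ 2) +
        (-((Real.pi : ℂ) * Complex.I)) * (1 / ((((c⁻¹ : ℝ) : ℂ) - Complex.I * x))) := by
  have hw : (0:ℝ) < ((((c⁻¹ : ℝ) : ℂ) - Complex.I * x)).re := by
    rw [wre]; positivity
  rw [setIntegral_congr_fun measurableSet_Ioi (integrand_Ioi_eq hc x)]
  rw [integral_add ((intOn_mul_cexp hw).const_mul _) ((intOn_cexp hw).const_mul _),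
    MeasureTheory.integral_const_mul, MeasureTheory.integral_const_mul, integral_mul_cexp_Ioi hw, integral_cexp_Ioi hw]

lemma intM_Iio :
    ∫ ξ in Iio (0:ℝ), Complex.exp (Complex.I * ξ * x) * Mfun c ξ =
      (-((Real.pi : ℂ) * Complex.I)) * (1 / ((((c⁻¹ : ℝ) : ℂ) + Complex.I * x))) := by
  have hv : (0:ℝ) < ((((c⁻¹ : ℝ) : ℂ) + Complex.I * x)).re := by
    rw [vre]; positivity
  rw [setIntegral_congr_fun measurableSet_Iio (integrand_Iio_eq hc x)]
  rw [← integral_Iic_eq_integral_Iio]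
  have h2 := integral_comp_neg_Iic (0:ℝ) (fun s : ℝ =>
    (-((Real.pi : ℂ) * Complex.I)) * Complex.exp (-(((((c⁻¹ : ℝ) : ℂ) + Complex.I * x)) * s)))
  rw [neg_zero] at h2
  rw [h2, MeasureTheory.integral_const_mul, integral_cexp_Ioi hv]

lemma intOn_eMfun_Ioi : IntegrableOn (fun ξ : ℝ => Complex.exp (Complex.I * ξ * x) * Mfun c ξ)
    (Ioi 0) := by
  have hw : (0:ℝ) < ((((c⁻¹ : ℝ) : ℂ) - Complex.I * x)).re := by rw [wre]; positivity
  exact (Integrable.congr (((intOn_mul_cexp hw).const_mul _).add ((intOn_cexp hw).const_mul _))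
    (ae_restrict_of_forall_mem measurableSet_Ioi
      (fun ξ hξ => (integrand_Ioi_eq hc x ξ hξ).symm)))

lemma integrableOn_neg_iff (f : ℝ → ℂ) :
    IntegrableOn (fun ξ : ℝ => f (-ξ)) (Iio 0) ↔ IntegrableOn f (Ioi 0) := by
  have A : MeasurableEmbedding (fun x : ℝ => -x) := (Homeomorph.neg ℝ).measurableEmbedding
  have hm : (volume : Measure ℝ).restrict (Iio 0) =
      Measure.map (fun x : ℝ => -x) ((volume : Measure ℝ).restrict (Ioi 0)) := by
    rw [← Measure.map_neg_eq_self (volume : Measure ℝ)]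
    rw [Measure.restrict_map measurable_neg measurableSet_Iio]
    congr 1
    ext y
    simp
  rw [IntegrableOn, hm, A.integrable_map_iff]
  constructor
  · intro h; exact h.congr (by filter_upwards with ξ; simp [Function.comp])
  · intro h; exact h.congr (by filter_upwards with ξ; simp [Function.comp])

lemma intOn_eMfun_Iio : IntegrableOn (fun ξ : ℝ => Complex.exp (Complex.I * ξ * x) * Mfun c ξ)
    (Iio 0) := by
  have hv : (0:ℝ) < ((((c⁻¹ : ℝ) : ℂ) + Complex.I * x)).re := by rw [vre]; positivity
  have hbase : IntegrableOn (fun ξ : ℝ =>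
      (-((Real.pi : ℂ) * Complex.I)) *
        Complex.exp (-(((((c⁻¹ : ℝ) : ℂ) + Complex.I * x)) * (-ξ : ℝ)))) (Iio 0) := by
    apply Integrable.const_mul
    exact (integrableOn_neg_iff hc
      (fun s : ℝ => Complex.exp (-(((((c⁻¹ : ℝ) : ℂ) + Complex.I * x)) * s)))).mpr (intOn_cexp hv)
  exact Integrable.congr hbase (ae_restrict_of_forall_mem measurableSet_Iio
    (fun ξ hξ => (integrand_Iio_eq hc x ξ hξ).symm))

lemma intM_total :
    ∫ ξ : ℝ, Complex.exp (Complex.I * ξ * x) * Mfun c ξ =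
      (-((Real.pi : ℂ) * Complex.I)) * (1 / ((((c⁻¹ : ℝ) : ℂ) + Complex.I * x))) +
      ((-(2 * (Real.pi : ℂ) * Complex.I / c)) * (1 / ((((c⁻¹ : ℝ) : ℂ) - Complex.I * x)) ^ 2) +
        (-((Real.pi : ℂ) * Complex.I)) * (1 / ((((c⁻¹ : ℝ) : ℂ) - Complex.I * x)))) := by
  rw [← intervalIntegral.integral_Iio_add_Ici (intOn_eMfun_Iio hc x)
    ((intOn_eMfun_Ioi hc x).congr_set_ae Ioi_ae_eq_Ici.symm), integral_Ici_eq_integral_Ioi,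
    intM_Iio hc x, intM_Ioi hc x]

lemma int_eMfun : Integrable (fun ξ : ℝ => Complex.exp (Complex.I * ξ * x) * Mfun c ξ) := by
  have := (intOn_eMfun_Iio hc x).union ((intOn_eMfun_Ioi hc x).congr_set_ae Ioi_ae_eq_Ici.symm)
  rwa [Iio_union_Ici, integrableOn_univ] at this

lemma int_Mfun : Integrable (Mfun c) := by
  have := int_eMfun hc 0
  simpa using this

end

noncomputable def gfun (c : ℝ) (y : ℝ) : ℂ :=
  ((2 * c / (c ^ 2 * y ^ 2 + 1) : ℝ) : ℂ) * ((c : ℂ) * y + Complex.I)⁻¹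

section
variable {c : ℝ} (hc : 0 < c) (x : ℝ)

lemma den_ne (y : ℝ) : ((c : ℂ) * y + Complex.I) ≠ 0 := by
  intro h
  have := congrArg Complex.im h
  simp at this

lemma den_ne' (y : ℝ) : ((c : ℂ) * y - Complex.I) ≠ 0 := by
  intro h
  have := congrArg Complex.im h
  simp at this

include hc

lemma v_ne : ((((c⁻¹ : ℝ) : ℂ) + Complex.I * x)) ≠ 0 := by
  intro h
  have := congrArg Complex.re h
  rw [vre] at this
  simp at this
  exact absurd this (ne_of_gt hc)

lemma w_ne : ((((c⁻¹ : ℝ) : ℂ) - Complex.I * x)) ≠ 0 := by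
  intro h
  have := congrArg Complex.re h
  rw [wre] at this
  simp at this
  exact absurd this (ne_of_gt hc)

lemma claimA :
    ∫ ξ : ℝ, Complex.exp (Complex.I * ξ * x) * Mfun c ξ =
      2 * (Real.pi : ℂ) * gfun c x := by
  rw [intM_total hc x]
  unfold gfun
  have hcC : (c : ℂ) ≠ 0 := Complex.ofReal_ne_zero.mpr (ne_of_gt hc)
  have h1 := den_ne (c := c) x
  have h2 := den_ne' (c := c) x
  have h3 := v_ne hc x
  have h4 := w_ne hc x
  have hq : ((c : ℂ) ^ 2 * (x : ℂ) ^ 2 + 1) ≠ 0 := by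
    intro h
    have : ((c ^ 2 * x ^ 2 + 1 : ℝ) : ℂ) = 0 := by push_cast; linear_combination h
    rw [Complex.ofReal_eq_zero] at this
    nlinarith [sq_nonneg (c * x)]
  have h5 : (1 + Complex.I * c * x) ≠ 0 := by
    intro h
    have := congrArg Complex.re h
    simp at this
  have h6 : (1 - Complex.I * c * x) ≠ 0 := by
    intro h
    have := congrArg Complex.re h
    simp at this
  have hv_eq : (((c : ℂ))⁻¹ + Complex.I * x) = (1 + Complex.I * c * x) / c := by
    field_simp
  have hw_eq : (((c : ℂ))⁻¹ - Complex.I * x) = (1 - Complex.I * c * x) / c := by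
    field_simp
  have hden_eq : ((c : ℂ) * x + Complex.I) = Complex.I * (1 - Complex.I * c * x) := by
    linear_combination ((c : ℂ) * x) * Complex.I_sq
  have hfact2 : ((c : ℂ) ^ 2 * (x : ℂ) ^ 2 + 1) =
      (1 + Complex.I * c * x) * (1 - Complex.I * c * x) := by
    linear_combination ((c : ℂ) ^ 2 * (x : ℂ) ^ 2) * Complex.I_sq
  push_cast
  rw [hv_eq, hw_eq, show ((c:ℂ)^2 * (x:ℂ)^2 + 1) = (1 + Complex.I * c * x) * (1 - Complex.I * c * x) from hfact2, hden_eq]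
  have hI : Complex.I ≠ 0 := Complex.I_ne_zero
  field_simp
  have p2 : Complex.I ^ 2 = -1 := Complex.I_sq
  have p3 : Complex.I ^ 3 = -Complex.I := by rw [pow_succ, p2]; ring
  have p4 : Complex.I ^ 4 = 1 := by rw [pow_succ, p3]; simp
  have p5 : Complex.I ^ 5 = Complex.I := by rw [pow_succ, p4]; ring
  have p6 : Complex.I ^ 6 = -1 := by rw [pow_succ, p5]; exact Complex.I_mul_I
  linear_combination (-4 : ℂ) * p2

end

section
variable {c : ℝ} (hc : 0 < c)

lemma gfun_continuous : Continuous (gfun c) := by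
  unfold gfun
  apply Continuous.mul
  · apply Complex.continuous_ofReal.comp
    apply Continuous.div continuous_const (by continuity)
    intro y
    positivity
  · exact Continuous.inv₀ (by continuity) (fun y => den_ne y)

include hc

lemma gfun_integrable : Integrable (gfun c) := by
  have hbase : Integrable (fun y : ℝ => (1 + (c * y) ^ 2)⁻¹) :=
    (integrable_comp_mul_left_iff (fun z : ℝ => (1 + z ^ 2)⁻¹) (ne_of_gt hc)).mpr
      integrable_inv_one_add_sq
  apply Integrable.mono' (hbase.const_mul (2 * c))
  · exact gfun_continuous.aestronglyMeasurable
  · filter_upwards with y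
    unfold gfun
    rw [norm_mul, Complex.norm_real]
    have hpos : (0:ℝ) < c ^ 2 * y ^ 2 + 1 := by positivity
    have h1 : ‖((c : ℂ) * y + Complex.I)⁻¹‖ ≤ 1 := by
      rw [norm_inv]
      rw [inv_le_one_iff₀]
      right
      calc (1:ℝ) = |((c : ℂ) * y + Complex.I).im| := by simp
        _ ≤ ‖((c : ℂ) * y + Complex.I)‖ := Complex.abs_im_le_norm _
        _ = ‖((c : ℂ) * y + Complex.I)‖ := rfl
    calc |2 * c / (c ^ 2 * y ^ 2 + 1)| * ‖((c : ℂ) * y + Complex.I)⁻¹‖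
        ≤ (2 * c / (c ^ 2 * y ^ 2 + 1)) * 1 := by
          rw [abs_of_pos (by positivity)]
          gcongr
      _ = 2 * c * (1 + (c * y) ^ 2)⁻¹ := by rw [mul_one]; rw [div_eq_mul_inv]; ring_nf

lemma FTg (ξ : ℝ) :
    (∫ x : ℝ, Complex.exp (-(Complex.I * ξ * x)) * gfun c x) = Mfun c ξ := by
  classical
  set N : ℝ → ℂ := fun v => Mfun c (2 * Real.pi * v) with hN
  have h2π : (2 * Real.pi) ≠ 0 := by positivity
  have hNint : Integrable N := (integrable_comp_mul_left_iff (Mfun c) h2π).mpr (int_Mfun hc)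
  have hinv : FourierTransformInv.fourierInv N = gfun c := by
    ext x
    rw [Real.fourierInv_eq']
    have hcong : ∀ v : ℝ, Complex.exp ((2 * Real.pi * (inner ℝ v x : ℝ) : ℝ) * Complex.I) • N v
        = (fun s : ℝ => Complex.exp (Complex.I * s * x) * Mfun c s) (2 * Real.pi * v) := by
      intro v
      rw [smul_eq_mul]
      congr 2
      simp only [RCLike.inner_apply, conj_trivial]
      push_cast
      ring
    rw [integral_congr_ae (Filter.Eventually.of_forall hcong)]
    rw [MeasureTheory.Measure.integral_comp_mul_left
      (fun s : ℝ => Complex.exp (Complex.I * s * x) * Mfun c s) (2 * Real.pi)]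
    rw [claimA hc x]
    rw [abs_of_pos (by positivity : (0:ℝ) < (2 * Real.pi)⁻¹), Complex.real_smul]
    push_cast
    have hπ : (Real.pi : ℂ) ≠ 0 := Complex.ofReal_ne_zero.mpr Real.pi_ne_zero
    field_simp
  have hFN : FourierTransform.fourier N = fun y => gfun c (-y) := by
    ext y
    have := Real.fourierInv_eq_fourier_neg N (-y)
    rw [neg_neg, hinv] at this
    exact this.symm
  have hFNint : Integrable (FourierTransform.fourier N) := by
    rw [hFN]
    have := (integrable_comp_mul_left_iff (gfun c) (by norm_num : (-1:ℝ) ≠ 0)).mpr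
      (gfun_integrable hc)
    simpa using this
  have hcont : ContinuousAt N (ξ / (2 * Real.pi)) :=
    (Mfun_continuous.comp (continuous_const.mul continuous_id)).continuousAt
  have hinv2 := MeasureTheory.Integrable.fourier_fourierInv_eq hNint hFNint hcont
  rw [hinv] at hinv2
  have hNval : N (ξ / (2 * Real.pi)) = Mfun c ξ := by
    rw [hN]
    simp only []
    congr 1
    field_simp
  rw [Real.fourier_real_eq_integral_exp_smul] at hinv2
  rw [← hNval, ← hinv2]
  apply integral_congr_ae
  filter_upwards with x
  rw [smul_eq_mul]
  congr 2
  push_cast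
  have hπ : (Real.pi : ℂ) ≠ 0 := Complex.ofReal_ne_zero.mpr Real.pi_ne_zero
  field_simp

end

/-- For the soliton profile `Q_c(x) = 2c/(c²x²+1)`, the function
`f(x) = (cx+i)⁻¹` satisfies `-i f' - C₊(Q_c f) = -(c/2) f`, i.e. the Lax operator
`L = -i∂ - C₊ q` at `q = Q_c` has eigenvalue `-c/2` with eigenvector `(cx+i)⁻¹`. -/
theorem stmt16 (c : ℝ) (hc : 0 < c) :
    ∀ x : ℝ,
      -Complex.I * deriv (fun y : ℝ => ((c : ℂ) * y + Complex.I)⁻¹) x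
          - Cplus (fun y : ℝ =>
              ((2 * c / (c ^ 2 * y ^ 2 + 1) : ℝ) : ℂ) * ((c : ℂ) * y + Complex.I)⁻¹) x
        = -((c : ℂ) / 2) * ((c : ℂ) * x + Complex.I)⁻¹ := by
  intro x
  have hden := den_ne (c := c) x
  have hd : HasDerivAt (fun y : ℝ => ((c : ℂ) * y + Complex.I)⁻¹)
      (-(c : ℂ) / ((c : ℂ) * x + Complex.I) ^ 2) x := by
    have h0 : HasDerivAt (fun z : ℂ => (c : ℂ) * z + Complex.I) (c : ℂ) ((x : ℝ) : ℂ) := by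
      simpa using ((hasDerivAt_id ((x : ℝ) : ℂ)).const_mul (c : ℂ)).add_const Complex.I
    exact (h0.inv hden).comp_ofReal
  rw [hd.deriv]
  have hgf : (fun y : ℝ =>
      ((2 * c / (c ^ 2 * y ^ 2 + 1) : ℝ) : ℂ) * ((c : ℂ) * y + Complex.I)⁻¹) = gfun c := rfl
  rw [hgf]
  have hFT : ∀ ξ : ℝ, FT (gfun c) ξ = ((Real.sqrt (2 * Real.pi))⁻¹ : ℝ) * Mfun c ξ := by
    intro ξ
    unfold FT
    rw [FTg hc ξ]
  have hC : Cplus (gfun c) x = (((2 * Real.pi)⁻¹ : ℝ) : ℂ) *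
      ((-(2 * (Real.pi : ℂ) * Complex.I / c)) * (1 / ((((c⁻¹ : ℝ) : ℂ) - Complex.I * x)) ^ 2) +
        (-((Real.pi : ℂ) * Complex.I)) * (1 / ((((c⁻¹ : ℝ) : ℂ) - Complex.I * x)))) := by
    unfold Cplus
    simp_rw [hFT, mul_left_comm _ (((Real.sqrt (2 * Real.pi))⁻¹ : ℝ) : ℂ)]
    rw [MeasureTheory.integral_const_mul, integral_Ici_eq_integral_Ioi, intM_Ioi hc x,
      ← mul_assoc]
    congr 1
    rw [← Complex.ofReal_mul]
    congr 1
    rw [← Real.sqrt_inv]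
    exact Real.mul_self_sqrt (by positivity)
  rw [hC]
  have hcC : (c : ℂ) ≠ 0 := Complex.ofReal_ne_zero.mpr (ne_of_gt hc)
  have hπ : (Real.pi : ℂ) ≠ 0 := Complex.ofReal_ne_zero.mpr Real.pi_ne_zero
  have p2 : Complex.I ^ 2 = -1 := Complex.I_sq
  have hI : Complex.I ≠ 0 := Complex.I_ne_zero
  have h6 : (1 - Complex.I * c * x) ≠ 0 := by
    intro h
    have := congrArg Complex.re h
    simp at this
  have hw_eq : (((c⁻¹ : ℝ) : ℂ) - Complex.I * x) = (1 - Complex.I * c * x) / c := by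
    push_cast
    field_simp
  have hden_eq : ((c : ℂ) * x + Complex.I) = Complex.I * (1 - Complex.I * c * x) := by
    linear_combination ((c : ℂ) * x) * Complex.I_sq
  have e1 : 1 / ((((c⁻¹ : ℝ) : ℂ) - Complex.I * x)) = c / (1 - Complex.I * c * x) := by
    rw [hw_eq, one_div_div]
  have e2 : 1 / ((((c⁻¹ : ℝ) : ℂ) - Complex.I * x)) ^ 2 =
      (c : ℂ) ^ 2 / (1 - Complex.I * c * x) ^ 2 := by
    rw [hw_eq, div_pow, one_div_div]
  have e3 : ((c : ℂ) * x + Complex.I)⁻¹ = -Complex.I / (1 - Complex.I * c * x) := by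
    rw [hden_eq, mul_inv, div_eq_mul_inv]
    rw [Complex.inv_I]
  have e4 : ((c : ℂ) * x + Complex.I) ^ 2 = -(1 - Complex.I * c * x) ^ 2 := by
    rw [hden_eq, mul_pow, p2]
    ring
  have e4' : -(c : ℂ) / (((c : ℂ) * x + Complex.I) ^ 2) =
      (c : ℂ) / (1 - Complex.I * c * x) ^ 2 := by
    rw [e4, div_neg, neg_div, neg_neg]
  rw [e1, e2, e3, e4']
  push_cast
  have hPP : (Real.pi : ℂ) * ((Real.pi : ℂ))⁻¹ = 1 := mul_inv_cancel₀ hπ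
  have hCC : (c : ℂ) * ((c : ℂ))⁻¹ = 1 := mul_inv_cancel₀ hcC
  linear_combination (Complex.I * (c:ℂ) * (((1 - Complex.I*(c:ℂ)*(x:ℂ))^2)⁻¹) * (c:ℂ) * ((c:ℂ))⁻¹
      + (1/2) * Complex.I * (c:ℂ) * ((1 - Complex.I*(c:ℂ)*(x:ℂ)))⁻¹) * hPP
    + (Complex.I * (c:ℂ) * (((1 - Complex.I*(c:ℂ)*(x:ℂ))^2)⁻¹)) * hCC
end
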